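/- arXiv:1403.1951 — 6 statements merged into one kernel-verified Lean document; each statement's English description precedes it below -/
import Mathlib

section
/- Let h : Ξ* → Σ* be a solution of a system T of word equations over the set of unknowns Ξ = alp(T). Then there exist a principal solution g of T and a morphism θ : alp(g)* → Σ* with h = θ∘g, and g and θ are unique in the following sense: if g' is a principal solution of T and θ' a morphism with h = θ'∘g', then g' = ρ∘g for a renaming of letters ρ (a bijective letter-to-letter morphism) and θ' = θ∘ρ⁻¹. Moreover: (i) if T is not trivial then |alp(g)| < |alp(T)|; and (ii) if h₁ and h₂ are two solutions of T with the same length type L(h₁) = L(h₂), then their principal solutions coincide up to renaming of letters and the associated morphisms θ₁, θ₂ satisfy L(θ₁) = L(θ₂). -/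
open scoped BigOperators

namespace WordEquations

/-- The set of letters occurring in the images of a (letter-image) morphism. -/
def alph {Ξ Δ : Type*} (h : Ξ → List Δ) : Set Δ := ⋃ x, {a | a ∈ h x}

/-- `h` is a solution of the system `T` of word equations. -/
def IsSolution {Ξ A : Type*} (h : Ξ → List A) (T : Set (List Ξ × List Ξ)) : Prop :=
  ∀ e ∈ T, e.1.flatMap h = e.2.flatMap h

/-- `h` is a solution of the single word equation `E`. -/
def IsSolutionE {Ξ A : Type*} (h : Ξ → List A) (E : List Ξ × List Ξ) : Prop :=
  E.1.flatMap h = E.2.flatMap h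

/-- `θ` is a renaming of letters on the set `S`: it maps each letter of `S` to a
single letter, injectively on `S`. -/
def IsRenamingOn {A B : Type*} (θ : A → List B) (S : Set A) : Prop :=
  (∀ a ∈ S, ∃ b, θ a = [b]) ∧ ∀ a₁ ∈ S, ∀ a₂ ∈ S, θ a₁ = θ a₂ → a₁ = a₂

/-- `g` is a principal solution of `T`: whenever `g = θ ∘ g'` for a solution `g'`
(and a morphism `θ` non-erasing on `alph g'`), `θ` is a renaming of letters. -/
def IsPrincipalSolution {Ξ Δ : Type*} (g : Ξ → List Δ) (T : Set (List Ξ × List Ξ)) : Prop :=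
  IsSolution g T ∧
  ∀ (Δ' : Type) (g' : Ξ → List Δ') (θ : Δ' → List Δ),
    IsSolution g' T → (∀ a ∈ alph g', θ a ≠ []) →
    (∀ x, g x = (g' x).flatMap θ) → IsRenamingOn θ (alph g')

/-- The vector `γ(h)_a = (|h(x₁)|_a, …, |h(xₙ)|_a) ∈ ℚⁿ`. -/
def gamVec {n : ℕ} {Δ : Type*} [DecidableEq Δ] (h : Fin n → List Δ) (a : Δ) :
    Fin n → ℚ := fun j => ((h j).count a : ℚ)

/-- `Γ_h`, the ℚ-span of the vectors `γ(h)_a`. -/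
noncomputable def GammaSpace {n : ℕ} {Δ : Type*} [DecidableEq Δ] (h : Fin n → List Δ) :
    Submodule ℚ (Fin n → ℚ) := Submodule.span ℚ (Set.range (gamVec h))

/-- The rank of a morphism: `dim Γ_h`. -/
noncomputable def morphRank {n : ℕ} {Δ : Type*} [DecidableEq Δ] (h : Fin n → List Δ) : ℕ :=
  Module.finrank ℚ ↥(GammaSpace h)

/-- `Mℕ`: all finite nonempty sums `Σᵢ aᵢ αᵢ` with `aᵢ` positive integers and `αᵢ ∈ M`
(equivalently, nonempty finite sums of elements of `M` with repetitions). -/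
def natSums {n : ℕ} (M : Set (Fin n → ℚ)) : Set (Fin n → ℚ) :=
  {v | ∃ l : List (Fin n → ℚ), l ≠ [] ∧ (∀ x ∈ l, x ∈ M) ∧ l.sum = v}

/-- `M ⊆ ℚⁿ` has rank `r`: the ℚ-span of `M` has dimension `r`, and `M` is not contained
in any finite union of `(r-1)`-dimensional subspaces of its span. -/
def HasRank {n : ℕ} (M : Set (Fin n → ℚ)) (r : ℕ) : Prop :=
  Module.finrank ℚ ↥(Submodule.span ℚ M) = r ∧
  ∀ V : Finset (Submodule ℚ (Fin n → ℚ)),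
    (∀ W ∈ V, W ≤ Submodule.span ℚ M ∧ Module.finrank ℚ ↥W + 1 = r) →
    ¬ M ⊆ ⋃ W ∈ V, (W : Set (Fin n → ℚ))

/-- The monomial `X^α = ∏ᵢ Xᵢ^{αᵢ}` in `ℤ[X₁,…,Xₙ]`. -/
noncomputable def Xpow {n : ℕ} (α : Fin n → ℕ) : MvPolynomial (Fin n) ℤ :=
  ∏ i, MvPolynomial.X i ^ α i

/-- The polynomial `Σ_{a : w_a = j} ∏_{t<a} X_{w_t}` associated with one side of an equation. -/
noncomputable def sideS {n : ℕ} (w : List (Fin n)) (j : Fin n) : MvPolynomial (Fin n) ℤ :=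
  ∑ a : Fin w.length, if w.get a = j then ((w.take (a : ℕ)).map MvPolynomial.X).prod else 0

/-- The polynomial `S_{E,x_j}` of the equation `E = (u,v)`. -/
noncomputable def SE {n : ℕ} (E : List (Fin n) × List (Fin n)) (j : Fin n) :
    MvPolynomial (Fin n) ℤ :=
  sideS E.1 j - sideS E.2 j

/-- Evaluation `p ↦ p(β)`, induced by `Xᵢ ↦ x^{βᵢ}`. -/
noncomputable def evalAt {n : ℕ} (β : Fin n → ℕ) (p : MvPolynomial (Fin n) ℤ) : Polynomial ℤ :=
  MvPolynomial.eval₂ (Int.castRingHom (Polynomial ℤ)) (fun i => Polynomial.X ^ β i) p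

/-- `λ⁺`, the positive part of an integer vector. -/
def lamPos {n : ℕ} (lam : Fin n → ℤ) : Fin n → ℕ := fun i => (lam i).toNat

/-- `λ⁻`, the negative part of an integer vector. -/
def lamNeg {n : ℕ} (lam : Fin n → ℤ) : Fin n → ℕ := fun i => (-(lam i)).toNat

/-- The length type `L(θ_α ∘ h)` of the composition of `h` with the power morphism
`θ_α : aᵢ ↦ aᵢ^{αᵢ}`. -/
def powLenType {n k : ℕ} (α : Fin k → ℕ) (h : Fin n → List (Fin k)) : Fin n → ℕ :=
  fun x => ∑ a, α a * (h x).count a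

/-- The field `ℚ(x)`, realized as the field of fractions of `ℤ[x]`. -/
noncomputable abbrev RatX : Type := FractionRing (Polynomial ℤ)

/-- The vector `𝒮_E(β) ∈ ℚ(x)ⁿ`. -/
noncomputable def SEvec {n : ℕ} (E : List (Fin n) × List (Fin n)) (β : Fin n → ℕ) :
    Fin n → RatX :=
  fun j => algebraMap (Polynomial ℤ) RatX (evalAt β (SE E j))

/-- The set of exponents of the minimal monomials of `p` (exponents in the support of `p`
that are minimal with respect to the componentwise order). -/
noncomputable def minimalSupport {n : ℕ} (p : MvPolynomial (Fin n) ℤ) : Finset (Fin n →₀ ℕ) :=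
  p.support.filter (fun β => ∀ β' ∈ p.support, β' ≤ β → β' = β)


section Sync
variable {Δ₁ Δ₂ Sig : Type*} (θ₁ : Δ₁ → List Sig) (θ₂ : Δ₂ → List Sig)

/-- θ-length of a word -/
def flen (θ : Δ₁ → List Sig) (l : List Δ₁) : ℕ := (l.flatMap θ).length

lemma flen_nil (θ : Δ₁ → List Sig) : flen θ [] = 0 := rfl

lemma flen_append (θ : Δ₁ → List Sig) (l l' : List Δ₁) :
    flen θ (l ++ l') = flen θ l + flen θ l' := by
  simp [flen, List.flatMap_append]

lemma flen_cons (θ : Δ₁ → List Sig) (a : Δ₁) (l : List Δ₁) :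
    flen θ (a :: l) = (θ a).length + flen θ l := by
  simp [flen, List.flatMap_cons]

lemma flen_reverse (θ : Δ₁ → List Sig) (l : List Δ₁) :
    flen θ l.reverse = flen θ l := by
  induction l with
  | nil => rfl
  | cons a t ih =>
    rw [List.reverse_cons, flen_append, flen_cons, ih, flen_cons, flen_nil]
    omega

lemma flen_pos (θ : Δ₁ → List Sig) (l : List Δ₁) (hl : l ≠ [])
    (hne : ∀ a ∈ l, θ a ≠ []) : 0 < flen θ l := by
  cases l with
  | nil => exact absurd rfl hl
  | cons a t =>
    have : θ a ≠ [] := hne a (by simp)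
    have := List.length_pos_iff.2 this
    rw [flen_cons]; omega

lemma flen_eq_length (θ : Δ₁ → List Sig) (l : List Δ₁) : flen θ l = (l.flatMap θ).length := rfl

def go (w₁ : List Δ₁) (w₂ : List Δ₂) (acc₁ : List Δ₁) (acc₂ : List Δ₂) (n₁ n₂ : ℕ) :
    List (List Δ₁ × List Δ₂) :=
  if n₁ < n₂ then
    match w₁ with
    | [] => [(acc₁.reverse, acc₂.reverse ++ w₂)]
    | a :: t₁ => go t₁ w₂ (a :: acc₁) acc₂ (n₁ + (θ₁ a).length) n₂
  else if n₂ < n₁ then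
    match w₂ with
    | [] => [(acc₁.reverse ++ w₁, acc₂.reverse)]
    | b :: t₂ => go w₁ t₂ acc₁ (b :: acc₂) n₁ (n₂ + (θ₂ b).length)
  else
    if acc₁.length + acc₂.length = 0 then
      match w₁, w₂ with
      | [], [] => []
      | [], b :: t₂ => [([], b :: t₂)]
      | a :: t₁, w₂ => go t₁ w₂ [a] [] (θ₁ a).length 0
    else (acc₁.reverse, acc₂.reverse) :: go w₁ w₂ [] [] 0 0
  termination_by (w₁.length + w₂.length, acc₁.length + acc₂.length)
  decreasing_by
    all_goals (simp_all [Prod.lex_iff]; try omega)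
    rename_i h3
    rcases acc₁ with _ | ⟨a, t⟩
    · rcases acc₂ with _ | ⟨b, t2⟩
      · exact absurd rfl (h3 rfl)
      · simp
    · simp

theorem go_fst : ∀ (w₁ : List Δ₁) (w₂ : List Δ₂) acc₁ acc₂ n₁ n₂,
    (go θ₁ θ₂ w₁ w₂ acc₁ acc₂ n₁ n₂).flatMap Prod.fst = acc₁.reverse ++ w₁ := by
  intro w₁ w₂ acc₁ acc₂ n₁ n₂
  induction w₁, w₂, acc₁, acc₂, n₁, n₂ using go.induct (θ₁ := θ₁) (θ₂ := θ₂) with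
  | _ => rw [go.eq_def] ; split_ifs <;> simp_all

theorem go_snd : ∀ (w₁ : List Δ₁) (w₂ : List Δ₂) acc₁ acc₂ n₁ n₂,
    (go θ₁ θ₂ w₁ w₂ acc₁ acc₂ n₁ n₂).flatMap Prod.snd = acc₂.reverse ++ w₂ := by
  intro w₁ w₂ acc₁ acc₂ n₁ n₂
  induction w₁, w₂, acc₁, acc₂, n₁, n₂ using go.induct (θ₁ := θ₁) (θ₂ := θ₂) with
  | _ => rw [go.eq_def] ; split_ifs <;> simp_all

theorem go_blocks : ∀ (w₁ : List Δ₁) (w₂ : List Δ₂) acc₁ acc₂ n₁ n₂,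
    n₁ = flen θ₁ acc₁ → n₂ = flen θ₂ acc₂ →
    (acc₁.reverse ++ w₁).flatMap θ₁ = (acc₂.reverse ++ w₂).flatMap θ₂ →
    (∀ a ∈ acc₁.reverse ++ w₁, θ₁ a ≠ []) → (∀ b ∈ acc₂.reverse ++ w₂, θ₂ b ≠ []) →
    ∀ blk ∈ go θ₁ θ₂ w₁ w₂ acc₁ acc₂ n₁ n₂,
      blk.1.flatMap θ₁ = blk.2.flatMap θ₂ ∧ blk.1 ≠ [] ∧ blk.2 ≠ [] := by
  intro w₁ w₂ acc₁ acc₂ n₁ n₂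
  induction w₁, w₂, acc₁, acc₂, n₁, n₂ using go.induct (θ₁ := θ₁) (θ₂ := θ₂) with
  | case1 w₂ acc₁ acc₂ n₁ n₂ hlt =>
    -- n₁ < n₂, w₁ = [] : impossible
    intro h₁ h₂ hinv hne₁ hne₂
    exfalso
    have := congrArg List.length hinv
    simp only [List.flatMap_append, List.length_append, ← flen_eq_length, flen_reverse,
      flen_nil] at this
    omega
  | case2 w₂ acc₁ acc₂ n₁ n₂ hlt a t₁ ih =>
    intro h₁ h₂ hinv hne₁ hne₂
    rw [go.eq_def]
    simp only [if_pos hlt]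
    apply ih
    · rw [h₁, flen_cons]; omega
    · exact h₂
    · simpa [List.reverse_cons, List.append_assoc] using hinv
    · intro x hx; apply hne₁; simpa [List.reverse_cons, List.append_assoc] using hx
    · exact hne₂
  | case3 w₁ acc₁ acc₂ n₁ n₂ hnlt hlt =>
    intro h₁ h₂ hinv hne₁ hne₂
    exfalso
    have := congrArg List.length hinv
    simp only [List.flatMap_append, List.length_append, ← flen_eq_length, flen_reverse,
      flen_nil] at this
    omega
  | case4 w₁ acc₁ acc₂ n₁ n₂ hnlt hlt b t₂ ih =>
    intro h₁ h₂ hinv hne₁ hne₂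
    rw [go.eq_def]
    simp only [if_neg hnlt, if_pos hlt]
    apply ih
    · exact h₁
    · rw [h₂, flen_cons]; omega
    · simpa [List.reverse_cons, List.append_assoc] using hinv
    · exact hne₁
    · intro x hx; apply hne₂; simpa [List.reverse_cons, List.append_assoc] using hx
  | case5 acc₁ acc₂ n₁ n₂ hnlt hnlt' hacc =>
    intro h₁ h₂ hinv hne₁ hne₂
    rw [go.eq_def]
    simp only [if_neg hnlt, if_neg hnlt', if_pos hacc]
    simp
  | case6 acc₁ acc₂ n₁ n₂ hnlt hnlt' hacc b t₂ =>
    intro h₁ h₂ hinv hne₁ hne₂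
    exfalso
    have hacc₂ : acc₂ = [] := by
      rcases acc₂ with _ | _ <;> simp_all
    have hacc₁ : acc₁ = [] := by
      rcases acc₁ with _ | _ <;> simp_all
    subst hacc₁; subst hacc₂
    simp only [List.reverse_nil, List.nil_append, List.flatMap_nil, List.flatMap_cons] at hinv
    have : θ₂ b ≠ [] := hne₂ b (by simp)
    have := congrArg List.length hinv
    simp only [List.length_append] at this
    simp only [List.length_nil] at this
    have := List.length_pos_iff.2 ‹θ₂ b ≠ []›
    omega
  | case7 acc₁ acc₂ n₁ n₂ hnlt hnlt' hacc a t₁ w₂ ih =>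
    intro h₁ h₂ hinv hne₁ hne₂
    have hacc₂ : acc₂ = [] := by rcases acc₂ with _ | _ <;> simp_all
    have hacc₁ : acc₁ = [] := by rcases acc₁ with _ | _ <;> simp_all
    subst hacc₁; subst hacc₂
    rw [go.eq_def]
    simp only [if_neg hnlt, if_neg hnlt']
    simp only [List.length_nil, Nat.add_zero, if_pos rfl]
    apply ih
    · simp [flen_cons, flen_nil]
    · rfl
    · simpa using hinv
    · intro x hx; apply hne₁; simpa using hx
    · exact hne₂
  | case8 w₁ w₂ acc₁ acc₂ n₁ n₂ hnlt hnlt' hacc ih =>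
    intro h₁ h₂ hinv hne₁ hne₂
    have heq : n₁ = n₂ := by omega
    -- split the invariant
    have hlen : (acc₁.reverse.flatMap θ₁).length = (acc₂.reverse.flatMap θ₂).length := by
      rw [← flen_eq_length, ← flen_eq_length, flen_reverse, flen_reverse, ← h₁, ← h₂, heq]
    rw [List.flatMap_append, List.flatMap_append] at hinv
    obtain ⟨hA, hW⟩ := List.append_inj hinv hlen
    -- acc₁ ≠ [] and acc₂ ≠ []
    have hacc₁ : acc₁ ≠ [] := by
      intro hc
      subst hc
      have : acc₂ ≠ [] := by intro hc2; simp [hc2] at hacc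
      have hpos : 0 < flen θ₂ acc₂ :=
        flen_pos θ₂ acc₂ this (by
          intro b hb; apply hne₂; rw [List.mem_append]; left
          simpa using hb)
      simp [flen_nil] at h₁
      omega
    have hacc₂ : acc₂ ≠ [] := by
      intro hc
      subst hc
      have : acc₁ ≠ [] := by intro hc2; simp [hc2] at hacc
      have hpos : 0 < flen θ₁ acc₁ :=
        flen_pos θ₁ acc₁ this (by
          intro b hb; apply hne₁; rw [List.mem_append]; left
          simpa using hb)
      simp [flen_nil] at h₂
      omega
    rw [go.eq_def]
    simp only [if_neg hnlt, if_neg hnlt', if_neg hacc]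
    intro blk hblk
    rcases List.mem_cons.1 hblk with hblk | hblk
    · subst hblk
      refine ⟨hA, by simpa using hacc₁, by simpa using hacc₂⟩
    · exact ih rfl rfl (by simpa using hW)
        (fun x hx => hne₁ x (by rw [List.mem_append]; right; simpa using hx))
        (fun x hx => hne₂ x (by rw [List.mem_append]; right; simpa using hx)) blk hblk

end Sync
section Sync2
variable {Δ₁ Δ₂ Sig : Type*} (θ₁ : Δ₁ → List Sig) (θ₂ : Δ₂ → List Sig)

theorem go_append (w₁ : List Δ₁) (w₂ : List Δ₂)
    (hww : w₁.flatMap θ₁ = w₂.flatMap θ₂)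
    (hnw₁ : ∀ a ∈ w₁, θ₁ a ≠ []) (hnw₂ : ∀ b ∈ w₂, θ₂ b ≠ []) :
    ∀ (u₁ : List Δ₁) (u₂ : List Δ₂) acc₁ acc₂ n₁ n₂,
    n₁ = flen θ₁ acc₁ → n₂ = flen θ₂ acc₂ →
    (acc₁.reverse ++ u₁).flatMap θ₁ = (acc₂.reverse ++ u₂).flatMap θ₂ →
    (∀ a ∈ acc₁.reverse ++ u₁, θ₁ a ≠ []) → (∀ b ∈ acc₂.reverse ++ u₂, θ₂ b ≠ []) →
    go θ₁ θ₂ (u₁ ++ w₁) (u₂ ++ w₂) acc₁ acc₂ n₁ n₂ =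
      go θ₁ θ₂ u₁ u₂ acc₁ acc₂ n₁ n₂ ++ go θ₁ θ₂ w₁ w₂ [] [] 0 0 := by
  intro u₁ u₂ acc₁ acc₂ n₁ n₂
  induction u₁, u₂, acc₁, acc₂, n₁, n₂ using go.induct (θ₁ := θ₁) (θ₂ := θ₂) with
  | case1 u₂ acc₁ acc₂ n₁ n₂ hlt =>
    intro h₁ h₂ hinv hne₁ hne₂
    exfalso
    have := congrArg List.length hinv
    simp only [List.flatMap_append, List.length_append, ← flen_eq_length, flen_reverse,
      flen_nil] at this
    omega
  | case2 u₂ acc₁ acc₂ n₁ n₂ hlt a t₁ ih =>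
    intro h₁ h₂ hinv hne₁ hne₂
    conv_lhs => rw [go.eq_def]
    conv_rhs => rw [go.eq_def (w₁ := a :: t₁)]
    simp only [if_pos hlt, List.cons_append]
    rw [ih (by rw [h₁, flen_cons]; omega) h₂
      (by simpa [List.reverse_cons, List.append_assoc] using hinv)
      (by intro x hx; apply hne₁; simpa [List.reverse_cons, List.append_assoc] using hx)
      hne₂]
  | case3 u₁ acc₁ acc₂ n₁ n₂ hnlt hlt =>
    intro h₁ h₂ hinv hne₁ hne₂
    exfalso
    have := congrArg List.length hinv
    simp only [List.flatMap_append, List.length_append, ← flen_eq_length, flen_reverse,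
      flen_nil] at this
    omega
  | case4 u₁ acc₁ acc₂ n₁ n₂ hnlt hlt b t₂ ih =>
    intro h₁ h₂ hinv hne₁ hne₂
    conv_lhs => rw [go.eq_def]
    conv_rhs => rw [go.eq_def (w₁ := u₁) (w₂ := b :: t₂)]
    simp only [if_neg hnlt, if_pos hlt, List.cons_append]
    rw [ih h₁ (by rw [h₂, flen_cons]; omega)
      (by simpa [List.reverse_cons, List.append_assoc] using hinv)
      hne₁
      (by intro x hx; apply hne₂; simpa [List.reverse_cons, List.append_assoc] using hx)]
  | case5 acc₁ acc₂ n₁ n₂ hnlt hnlt' hacc =>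
    intro h₁ h₂ hinv hne₁ hne₂
    have hacc₁ : acc₁ = [] := by rcases acc₁ with _ | _ <;> simp_all
    have hacc₂ : acc₂ = [] := by rcases acc₂ with _ | _ <;> simp_all
    subst hacc₁; subst hacc₂
    simp only [flen_nil] at h₁ h₂
    subst h₁; subst h₂
    conv_rhs => rw [go.eq_def (w₁ := ([] : List Δ₁))]
    simp
  | case6 acc₁ acc₂ n₁ n₂ hnlt hnlt' hacc b t₂ =>
    intro h₁ h₂ hinv hne₁ hne₂
    exfalso
    have hacc₁ : acc₁ = [] := by rcases acc₁ with _ | _ <;> simp_all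
    have hacc₂ : acc₂ = [] := by rcases acc₂ with _ | _ <;> simp_all
    subst hacc₁; subst hacc₂
    simp only [List.reverse_nil, List.nil_append, List.flatMap_nil, List.flatMap_cons] at hinv
    have hb : θ₂ b ≠ [] := hne₂ b (by simp)
    have := congrArg List.length hinv
    simp only [List.length_append, List.length_nil] at this
    have := List.length_pos_iff.2 hb
    omega
  | case7 acc₁ acc₂ n₁ n₂ hnlt hnlt' hacc a t₁ u₂ ih =>
    intro h₁ h₂ hinv hne₁ hne₂
    have hacc₁ : acc₁ = [] := by rcases acc₁ with _ | _ <;> simp_all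
    have hacc₂ : acc₂ = [] := by rcases acc₂ with _ | _ <;> simp_all
    subst hacc₁; subst hacc₂
    conv_lhs => rw [go.eq_def]
    conv_rhs => rw [go.eq_def (w₁ := a :: t₁)]
    simp only [if_neg hnlt, if_neg hnlt', List.length_nil, Nat.add_zero, if_pos rfl,
      List.cons_append, if_true]
    rw [ih (by simp [flen_cons, flen_nil]) rfl
      (by simpa using hinv)
      (by intro x hx; apply hne₁; simpa using hx)
      hne₂]
  | case8 u₁ u₂ acc₁ acc₂ n₁ n₂ hnlt hnlt' hacc ih =>
    intro h₁ h₂ hinv hne₁ hne₂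
    have heq : n₁ = n₂ := by omega
    have hlen : (acc₁.reverse.flatMap θ₁).length = (acc₂.reverse.flatMap θ₂).length := by
      rw [← flen_eq_length, ← flen_eq_length, flen_reverse, flen_reverse, ← h₁, ← h₂, heq]
    rw [List.flatMap_append, List.flatMap_append] at hinv
    obtain ⟨hA, hW⟩ := List.append_inj hinv hlen
    conv_lhs => rw [go.eq_def]
    conv_rhs => rw [go.eq_def (w₁ := u₁) (acc₁ := acc₁)]
    simp only [if_neg hnlt, if_neg hnlt', if_neg hacc]
    rw [ih rfl rfl (by simpa using hW)
      (fun x hx => hne₁ x (by rw [List.mem_append]; right; simpa using hx))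
      (fun x hx => hne₂ x (by rw [List.mem_append]; right; simpa using hx))]
    simp
end Sync2


section SyncTop
variable {Δ₁ Δ₂ Sig : Type*} (θ₁ : Δ₁ → List Sig) (θ₂ : Δ₂ → List Sig)

def sync (w₁ : List Δ₁) (w₂ : List Δ₂) : List (List Δ₁ × List Δ₂) :=
  go θ₁ θ₂ w₁ w₂ [] [] 0 0

lemma sync_nil : sync θ₁ θ₂ [] [] = [] := by
  rw [sync, go.eq_def]; simp

lemma sync_fst (w₁ : List Δ₁) (w₂ : List Δ₂) :
    (sync θ₁ θ₂ w₁ w₂).flatMap Prod.fst = w₁ := by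
  simpa [sync] using go_fst θ₁ θ₂ w₁ w₂ [] [] 0 0

lemma sync_snd (w₁ : List Δ₁) (w₂ : List Δ₂) :
    (sync θ₁ θ₂ w₁ w₂).flatMap Prod.snd = w₂ := by
  simpa [sync] using go_snd θ₁ θ₂ w₁ w₂ [] [] 0 0

lemma sync_blocks (w₁ : List Δ₁) (w₂ : List Δ₂)
    (hww : w₁.flatMap θ₁ = w₂.flatMap θ₂)
    (hnw₁ : ∀ a ∈ w₁, θ₁ a ≠ []) (hnw₂ : ∀ b ∈ w₂, θ₂ b ≠ []) :
    ∀ blk ∈ sync θ₁ θ₂ w₁ w₂,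
      blk.1.flatMap θ₁ = blk.2.flatMap θ₂ ∧ blk.1 ≠ [] ∧ blk.2 ≠ [] := by
  exact go_blocks θ₁ θ₂ w₁ w₂ [] [] 0 0 rfl rfl (by simpa using hww)
    (by simpa using hnw₁) (by simpa using hnw₂)

lemma sync_append (u₁ w₁ : List Δ₁) (u₂ w₂ : List Δ₂)
    (huu : u₁.flatMap θ₁ = u₂.flatMap θ₂)
    (hnu₁ : ∀ a ∈ u₁, θ₁ a ≠ []) (hnu₂ : ∀ b ∈ u₂, θ₂ b ≠ [])
    (hww : w₁.flatMap θ₁ = w₂.flatMap θ₂)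
    (hnw₁ : ∀ a ∈ w₁, θ₁ a ≠ []) (hnw₂ : ∀ b ∈ w₂, θ₂ b ≠ []) :
    sync θ₁ θ₂ (u₁ ++ w₁) (u₂ ++ w₂) = sync θ₁ θ₂ u₁ u₂ ++ sync θ₁ θ₂ w₁ w₂ := by
  exact go_append θ₁ θ₂ w₁ w₂ hww hnw₁ hnw₂ u₁ u₂ [] [] 0 0 rfl rfl
    (by simpa using huu) (by simpa using hnu₁) (by simpa using hnu₂)

end SyncTop

section Alph
variable {Ξ Δ : Type*}

lemma mem_alph {g : Ξ → List Δ} {a : Δ} : a ∈ alph g ↔ ∃ x, a ∈ g x := by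
  simp [alph]

lemma flatMap_congr' {α β : Type*} {l : List α} {f g : α → List β}
    (h : ∀ a ∈ l, f a = g a) : l.flatMap f = l.flatMap g := by
  induction l with
  | nil => rfl
  | cons a t ih =>
    simp only [List.flatMap_cons]
    rw [h a (by simp), ih fun a ha => h a (by simp [ha])]

end Alph

section LemmaB
variable {Ξ Sig : Type} [Fintype Ξ] {T : Set (List Ξ × List Ξ)} {Δ₁ Δ₂ : Type}

lemma lemmaB (hnem : Nonempty Δ₂)
    (g₁ : Ξ → List Δ₁) (θ₁ : Δ₁ → List Sig) (g₂ : Ξ → List Δ₂) (θ₂ : Δ₂ → List Sig)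
    (hp₁ : IsPrincipalSolution g₁ T) (hp₂ : IsPrincipalSolution g₂ T)
    (hθ₁ : ∀ a ∈ alph g₁, θ₁ a ≠ []) (hθ₂ : ∀ b ∈ alph g₂, θ₂ b ≠ [])
    (hmatch : ∀ x, (g₁ x).flatMap θ₁ = (g₂ x).flatMap θ₂) :
    ∃ ρ : Δ₁ → Δ₂, Set.InjOn ρ (alph g₁) ∧ ρ '' alph g₁ = alph g₂ ∧
      (∀ x, g₂ x = (g₁ x).map ρ) ∧ ∀ a ∈ alph g₁, θ₂ (ρ a) = θ₁ a := by
  classical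
  set p : Ξ → List (List Δ₁ × List Δ₂) := fun x => sync θ₁ θ₂ (g₁ x) (g₂ x) with hp
  have hn₁ : ∀ x, ∀ a ∈ g₁ x, θ₁ a ≠ [] := fun x a ha => hθ₁ a (mem_alph.2 ⟨x, ha⟩)
  have hn₂ : ∀ x, ∀ b ∈ g₂ x, θ₂ b ≠ [] := fun x b hb => hθ₂ b (mem_alph.2 ⟨x, hb⟩)
  have F1 : ∀ x, (p x).flatMap Prod.fst = g₁ x := fun x => sync_fst θ₁ θ₂ _ _
  have F2 : ∀ x, (p x).flatMap Prod.snd = g₂ x := fun x => sync_snd θ₁ θ₂ _ _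
  have Fw : ∀ u : List Ξ, (u.flatMap g₁).flatMap θ₁ = (u.flatMap g₂).flatMap θ₂ := by
    intro u
    rw [List.flatMap_assoc, List.flatMap_assoc]
    exact flatMap_congr' fun x _ => hmatch x
  have Fnw₁ : ∀ u : List Ξ, ∀ a ∈ u.flatMap g₁, θ₁ a ≠ [] := by
    intro u a ha
    obtain ⟨x, _, hx⟩ := List.mem_flatMap.1 ha
    exact hn₁ x a hx
  have Fnw₂ : ∀ u : List Ξ, ∀ b ∈ u.flatMap g₂, θ₂ b ≠ [] := by
    intro u b hb
    obtain ⟨x, _, hx⟩ := List.mem_flatMap.1 hb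
    exact hn₂ x b hx
  have Fu : ∀ u : List Ξ, u.flatMap p = sync θ₁ θ₂ (u.flatMap g₁) (u.flatMap g₂) := by
    intro u
    induction u with
    | nil => simp [sync_nil]
    | cons x u ih =>
      simp only [List.flatMap_cons]
      rw [ih, sync_append θ₁ θ₂ (g₁ x) (u.flatMap g₁) (g₂ x) (u.flatMap g₂)
        (hmatch x) (hn₁ x) (hn₂ x) (Fw u) (Fnw₁ u) (Fnw₂ u)]
  have hsolp : IsSolution p T := by
    intro e he
    rw [Fu e.1, Fu e.2, hp₁.1 e he, hp₂.1 e he]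
  have F3 : ∀ x, ∀ blk ∈ p x,
      blk.1.flatMap θ₁ = blk.2.flatMap θ₂ ∧ blk.1 ≠ [] ∧ blk.2 ≠ [] :=
    fun x => sync_blocks θ₁ θ₂ (g₁ x) (g₂ x) (hmatch x) (hn₁ x) (hn₂ x)
  have F3' : ∀ blk ∈ alph p,
      blk.1.flatMap θ₁ = blk.2.flatMap θ₂ ∧ blk.1 ≠ [] ∧ blk.2 ≠ [] := by
    intro blk hblk
    obtain ⟨x, hx⟩ := mem_alph.1 hblk
    exact F3 x blk hx
  have ren₁ : IsRenamingOn Prod.fst (alph p) :=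
    hp₁.2 (List Δ₁ × List Δ₂) p Prod.fst hsolp (fun blk hblk => (F3' blk hblk).2.1)
      (fun x => (F1 x).symm)
  have ren₂ : IsRenamingOn Prod.snd (alph p) :=
    hp₂.2 (List Δ₁ × List Δ₂) p Prod.snd hsolp (fun blk hblk => (F3' blk hblk).2.2)
      (fun x => (F2 x).symm)
  -- the renaming
  have hEx : ∀ a ∈ alph g₁, ∃ blk, blk ∈ alph p ∧ blk.1 = [a] := by
    intro a ha
    obtain ⟨x, hx⟩ := mem_alph.1 ha
    rw [← F1 x] at hx
    obtain ⟨blk, hblk, hab⟩ := List.mem_flatMap.1 hx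
    have hblk' : blk ∈ alph p := mem_alph.2 ⟨x, hblk⟩
    obtain ⟨a', ha'⟩ := ren₁.1 blk hblk'
    rw [ha'] at hab
    simp only [List.mem_singleton] at hab
    exact ⟨blk, hblk', by rw [ha', hab]⟩
  haveI : Nonempty Δ₂ := hnem
  set ρ : Δ₁ → Δ₂ := fun a =>
    if h : ∃ blk, blk ∈ alph p ∧ blk.1 = [a] then
      (ren₂.1 h.choose h.choose_spec.1).choose
    else Classical.arbitrary Δ₂ with hρ
  have hkey : ∀ blk ∈ alph p, ∀ a : Δ₁, blk.1 = [a] → blk.2 = [ρ a] := by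
    intro blk hblk a h1
    have hP : ∃ blk, blk ∈ alph p ∧ blk.1 = [a] := ⟨blk, hblk, h1⟩
    rw [hρ]
    simp only [dif_pos hP]
    have hspec := hP.choose_spec
    have hbe : hP.choose = blk :=
      ren₁.2 hP.choose hspec.1 blk hblk (by rw [hspec.2, h1])
    rw [← hbe]
    exact (ren₂.1 hP.choose hspec.1).choose_spec
  have hmap : ∀ x, g₂ x = (g₁ x).map ρ := by
    intro x
    have hin : ∀ blk ∈ p x, blk ∈ alph p := fun blk hb => mem_alph.2 ⟨x, hb⟩
    rw [← F1 x, ← F2 x]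
    generalize hl : p x = l at hin
    clear hl
    induction l with
    | nil => simp
    | cons blk t ih =>
      obtain ⟨a, ha⟩ := ren₁.1 blk (hin blk (by simp))
      have h2 := hkey blk (hin blk (by simp)) a ha
      simp only [List.flatMap_cons, List.map_append]
      rw [ha, h2, ih fun b hb => hin b (by simp [hb])]
      simp
  refine ⟨ρ, ?_, ?_, hmap, ?_⟩
  · intro a ha a' ha' heq
    obtain ⟨blk, hblk, h1⟩ := hEx a ha
    obtain ⟨blk', hblk', h1'⟩ := hEx a' ha'
    have h2 := hkey blk hblk a h1
    have h2' := hkey blk' hblk' a' h1'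
    have : blk = blk' := ren₂.2 blk hblk blk' hblk' (by rw [h2, h2', heq])
    rw [this, h1'] at h1
    exact (List.singleton_injective h1).symm
  · apply Set.Subset.antisymm
    · rintro b ⟨a, ha, rfl⟩
      obtain ⟨blk, hblk, h1⟩ := hEx a ha
      obtain ⟨x, hx⟩ := mem_alph.1 hblk
      have h2 := hkey blk hblk a h1
      have : ρ a ∈ (p x).flatMap Prod.snd :=
        List.mem_flatMap.2 ⟨blk, hx, by rw [h2]; simp⟩
      rw [F2 x] at this
      exact mem_alph.2 ⟨x, this⟩
    · intro b hb
      obtain ⟨x, hx⟩ := mem_alph.1 hb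
      rw [← F2 x] at hx
      obtain ⟨blk, hblk, hbb⟩ := List.mem_flatMap.1 hx
      have hblk' : blk ∈ alph p := mem_alph.2 ⟨x, hblk⟩
      obtain ⟨a, ha⟩ := ren₁.1 blk hblk'
      have haa : a ∈ alph g₁ := by
        refine mem_alph.2 ⟨x, ?_⟩
        rw [← F1 x]
        exact List.mem_flatMap.2 ⟨blk, hblk, by rw [ha]; simp⟩
      have h2 := hkey blk hblk' a ha
      rw [h2] at hbb
      simp only [List.mem_singleton] at hbb
      exact ⟨a, haa, hbb.symm⟩
  · intro a ha
    obtain ⟨blk, hblk, h1⟩ := hEx a ha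
    have h2 := hkey blk hblk a h1
    have hc := (F3' blk hblk).1
    rw [h1, h2] at hc
    simpa using hc.symm
end LemmaB
section Helpers2
variable {Ξ Δ Sig : Type*}

lemma alph_finite [Fintype Ξ] (g : Ξ → List Δ) : (alph g).Finite := by
  apply Set.finite_iUnion
  intro x
  exact (g x).finite_toSet

lemma ncard_alph_le [Fintype Ξ] (g : Ξ → List Δ) :
    (alph g).ncard ≤ ∑ x, (g x).length := by
  classical
  have h1 : alph g = ↑(Finset.univ.biUnion fun x => (g x).toFinset) := by
    ext a
    simp [mem_alph]
  rw [h1, Set.ncard_coe_finset]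
  calc (Finset.univ.biUnion fun x => (g x).toFinset).card
      ≤ ∑ x, (g x).toFinset.card := Finset.card_biUnion_le
    _ ≤ ∑ x, (g x).length := Finset.sum_le_sum fun x _ => (g x).toFinset_card_le

lemma length_le_sum (l : List ℕ) (h : ∀ n ∈ l, 1 ≤ n) : l.length ≤ l.sum := by
  induction l with
  | nil => simp
  | cons n t ih =>
    have h1 := h n (by simp)
    have h2 := ih fun m hm => h m (by simp [hm])
    simp only [List.length_cons, List.sum_cons]
    omega

lemma eq_one_of_sum_eq_length (l : List ℕ) (h : ∀ n ∈ l, 1 ≤ n)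
    (he : l.sum = l.length) : ∀ n ∈ l, n = 1 := by
  induction l with
  | nil => simp
  | cons n t ih =>
    have h1 := h n (by simp)
    have h2 := length_le_sum t fun m hm => h m (by simp [hm])
    simp only [List.sum_cons, List.length_cons] at he
    intro m hm
    rcases List.mem_cons.1 hm with rfl | hm
    · omega
    · exact ih (fun m hm => h m (by simp [hm])) (by omega) m hm

lemma flatMap_ne_nil {α β : Type*} (l : List α) (f : α → List β) (hl : l ≠ [])
    (hf : ∀ a, f a ≠ []) : l.flatMap f ≠ [] := by
  cases l with
  | nil => exact absurd rfl hl
  | cons a t =>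
    simp only [List.flatMap_cons, ne_eq, List.append_eq_nil_iff]
    intro ⟨h1, _⟩
    exact hf a h1

lemma eq_nil_of_flatMap_eq_nil {α β : Type*} {l : List α} {f : α → List β}
    (h : l.flatMap f = []) (hf : ∀ a ∈ l, f a ≠ []) : l = [] := by
  cases l with
  | nil => rfl
  | cons a t =>
    simp only [List.flatMap_cons, List.append_eq_nil_iff] at h
    exact absurd h.1 (hf a (by simp))

lemma flatMap_eq_map {α β : Type*} {l : List α} {f : α → List β} {F : α → β}
    (h : ∀ a ∈ l, f a = [F a]) : l.flatMap f = l.map F := by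
  induction l with
  | nil => rfl
  | cons a t ih =>
    simp only [List.flatMap_cons, List.map_cons]
    rw [h a (by simp), ih fun a ha => h a (by simp [ha])]
    rfl

end Helpers2

section LemmaA
variable {Ξ : Type} [Fintype Ξ]

noncomputable def msr {Δ : Type} (g : Ξ → List Δ) : ℕ :=
  (∑ x, (g x).length) * ((∑ x, (g x).length) + 1) + ((∑ x, (g x).length) - (alph g).ncard)

lemma lemmaA (T : Set (List Ξ × List Ξ)) :
    ∀ (N : ℕ) (Δ : Type) (g : Ξ → List Δ), msr g ≤ N → IsSolution g T →
    ∃ (Δp : Type) (p : Ξ → List Δp) (τ : Δp → List Δ),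
      IsPrincipalSolution p T ∧ (∀ c, τ c ≠ []) ∧ ∀ x, g x = (p x).flatMap τ := by
  intro N
  induction N using Nat.strong_induction_on with
  | _ N IH =>
  intro Δ g hm hsol
  by_cases hP : IsPrincipalSolution g T
  · exact ⟨Δ, g, fun a => [a], hP, by simp, fun x => (List.flatMap_singleton' (g x)).symm⟩
  have hP' : ¬ ∀ (Δ' : Type) (g' : Ξ → List Δ') (θ : Δ' → List Δ),
      IsSolution g' T → (∀ a ∈ alph g', θ a ≠ []) →
      (∀ x, g x = (g' x).flatMap θ) → IsRenamingOn θ (alph g') :=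
    fun hB => hP ⟨hsol, hB⟩
  push_neg at hP'
  obtain ⟨Δ', g', θ₀, hsol', hneθ, hdiv, hnren⟩ := hP'
  have halphne : (alph g').Nonempty := by
    by_contra hc
    rw [Set.not_nonempty_iff_eq_empty] at hc
    apply hnren
    rw [hc]
    exact ⟨fun a ha => absurd ha (Set.notMem_empty a),
      fun a ha => absurd ha (Set.notMem_empty a)⟩
  have hDne : Nonempty Δ := by
    by_contra hc
    have hnil : ∀ x, g' x = [] := by
      intro x
      have hgx : g x = [] :=
        List.eq_nil_iff_forall_not_mem.2 fun a ha => hc ⟨a⟩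
      exact eq_nil_of_flatMap_eq_nil ((hdiv x) ▸ hgx)
        fun a ha => hneθ a (mem_alph.2 ⟨x, ha⟩)
    obtain ⟨a, ha⟩ := halphne
    obtain ⟨x, hx⟩ := mem_alph.1 ha
    rw [hnil x] at hx
    exact absurd hx List.not_mem_nil
  obtain ⟨junk⟩ := hDne
  classical
  set θ : Δ' → List Δ := fun a => if θ₀ a = [] then [junk] else θ₀ a with hθdef
  have hθne : ∀ a, θ a ≠ [] := by
    intro a
    rw [hθdef]
    dsimp only
    split_ifs with h
    · simp
    · exact h
  have hθeq : ∀ a ∈ alph g', θ a = θ₀ a := by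
    intro a ha
    rw [hθdef]
    dsimp only
    rw [if_neg (hneθ a ha)]
  have hdiv' : ∀ x, g x = (g' x).flatMap θ := by
    intro x
    rw [hdiv x]
    exact (flatMap_congr' fun a ha => hθeq a (mem_alph.2 ⟨x, ha⟩)).symm
  have hnren' : ¬ IsRenamingOn θ (alph g') := by
    intro ⟨h1, h2⟩
    apply hnren
    constructor
    · intro a ha
      obtain ⟨b, hb⟩ := h1 a ha
      exact ⟨b, by rw [← hθeq a ha]; exact hb⟩
    · intro a₁ h₁ a₂ h₂ he
      exact h2 a₁ h₁ a₂ h₂ (by rw [hθeq a₁ h₁, hθeq a₂ h₂]; exact he)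
  clear hneθ hdiv hnren hθeq
  -- length bookkeeping
  have hlen : ∀ x, (g x).length = ((g' x).map fun a => (θ a).length).sum := by
    intro x
    rw [hdiv' x, List.length_flatMap]
  have hone : ∀ x, ∀ n ∈ (g' x).map fun a => (θ a).length, 1 ≤ n := by
    intro x n hn
    obtain ⟨a, _, rfl⟩ := List.mem_map.1 hn
    exact List.length_pos_iff.2 (hθne a)
  have hge : ∀ x, (g' x).length ≤ (g x).length := by
    intro x
    rw [hlen x]
    have := length_le_sum _ (hone x)
    simpa using this
  have hS' : (∑ x, (g' x).length) ≤ ∑ x, (g x).length :=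
    Finset.sum_le_sum fun x _ => hge x
  -- get the inductive step
  have key : msr g' < msr g := by
    rcases lt_or_eq_of_le hS' with hlt | heqS
    · -- total length decreased
      have h1 : msr g' ≤ (∑ x, (g' x).length) * ((∑ x, (g' x).length) + 2) := by
        unfold msr
        have := Nat.sub_le (∑ x, (g' x).length) (alph g').ncard
        nlinarith [this]
      have h2 : (∑ x, (g x).length) * ((∑ x, (g x).length) + 1) ≤ msr g := Nat.le_add_right _ _
      have h3 : (∑ x, (g' x).length) * ((∑ x, (g' x).length) + 2) <
          (∑ x, (g x).length) * ((∑ x, (g x).length) + 1) := by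
        have hle : (∑ x, (g' x).length) + 1 ≤ ∑ x, (g x).length := hlt
        calc (∑ x, (g' x).length) * ((∑ x, (g' x).length) + 2)
            < ((∑ x, (g' x).length) + 1) * ((∑ x, (g' x).length) + 2) := by
              have h2pos : 0 < (∑ x, (g' x).length) + 2 := by omega
              exact Nat.mul_lt_mul_of_lt_of_le (by omega) (le_refl _) h2pos
          _ ≤ (∑ x, (g x).length) * ((∑ x, (g x).length) + 1) :=
              Nat.mul_le_mul hle (by omega)
      omega
    · -- total length equal: alphabet grows
      have hxeq : ∀ x, (g' x).length = (g x).length := by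
        by_contra hc
        push_neg at hc
        obtain ⟨x₀, hx₀⟩ := hc
        have : (∑ x, (g' x).length) < ∑ x, (g x).length := by
          apply Finset.sum_lt_sum (fun x _ => hge x) ⟨x₀, Finset.mem_univ x₀, _⟩
          exact lt_of_le_of_ne (hge x₀) hx₀
        omega
      have hsng : ∀ a ∈ alph g', ∃ b, θ a = [b] := by
        intro a ha
        obtain ⟨x, hx⟩ := mem_alph.1 ha
        have hsum : ((g' x).map fun a => (θ a).length).sum =
            ((g' x).map fun a => (θ a).length).length := by
          rw [← hlen x, List.length_map]
          exact (hxeq x).symm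
        have h1 := eq_one_of_sum_eq_length _ (hone x) hsum ((θ a).length)
          (List.mem_map.2 ⟨a, hx, rfl⟩)
        exact List.length_eq_one_iff.1 h1
      haveI : Inhabited Δ := ⟨junk⟩
      set F : Δ' → Δ := fun a => (θ a).headI with hFdef
      have hF : ∀ a ∈ alph g', θ a = [F a] := by
        intro a ha
        obtain ⟨b, hb⟩ := hsng a ha
        rw [hFdef]
        dsimp only
        rw [hb]
        rfl
      have hgF : ∀ x, g x = (g' x).map F := by
        intro x
        rw [hdiv' x]
        exact flatMap_eq_map fun a ha => hF a (mem_alph.2 ⟨x, ha⟩)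
      have halph : alph g = F '' alph g' := by
        ext a
        constructor
        · intro ha
          obtain ⟨x, hx⟩ := mem_alph.1 ha
          rw [hgF x] at hx
          obtain ⟨b, hb, rfl⟩ := List.mem_map.1 hx
          exact ⟨b, mem_alph.2 ⟨x, hb⟩, rfl⟩
        · rintro ⟨b, hb, rfl⟩
          obtain ⟨x, hx⟩ := mem_alph.1 hb
          exact mem_alph.2 ⟨x, by rw [hgF x]; exact List.mem_map.2 ⟨b, hx, rfl⟩⟩
      have hninj : ¬ ∀ a₁ ∈ alph g', ∀ a₂ ∈ alph g', θ a₁ = θ a₂ → a₁ = a₂ :=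
        fun h2 => hnren' ⟨hsng, h2⟩
      push_neg at hninj
      obtain ⟨a₁, h₁, a₂, h₂, hFeq, hane⟩ := hninj
      have hFa : F a₁ = F a₂ := by rw [hFdef]; dsimp only; rw [hFeq]
      have himg : F '' alph g' = F '' (alph g' \ {a₂}) := by
        apply Set.Subset.antisymm
        · rintro b ⟨a, ha, rfl⟩
          by_cases hc : a = a₂
          · exact ⟨a₁, ⟨h₁, by simp [hane]⟩, by rw [hFa, hc]⟩
          · exact ⟨a, ⟨ha, by simp [hc]⟩, rfl⟩
        · exact Set.image_mono Set.diff_subset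
      have hfin' : (alph g').Finite := alph_finite g'
      have hcard : (alph g).ncard < (alph g').ncard := by
        calc (alph g).ncard = (F '' (alph g' \ {a₂})).ncard := by rw [halph, himg]
          _ ≤ (alph g' \ {a₂}).ncard := Set.ncard_image_le hfin'.diff
          _ < (alph g').ncard := Set.ncard_diff_singleton_lt_of_mem h₂ hfin'
      have hc'le : (alph g').ncard ≤ ∑ x, (g' x).length := ncard_alph_le g'
      unfold msr
      rw [heqS]
      have : (alph g).ncard ≤ ∑ x, (g x).length := ncard_alph_le g
      omega
  obtain ⟨Δp, p, τ', hpp, hτ', hdiv''⟩ := IH (msr g') (lt_of_lt_of_le key hm) Δ' g' le_rfl hsol'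
  refine ⟨Δp, p, fun c => (τ' c).flatMap θ, hpp, ?_, ?_⟩
  · intro c
    exact flatMap_ne_nil _ _ (hτ' c) hθne
  · intro x
    rw [hdiv' x, hdiv'' x, List.flatMap_assoc]
end LemmaA
section Chunk
variable {Δ : Type} [DecidableEq Δ]

def chunka (a : Δ) : List Δ → List (Δ × ℕ)
  | [] => []
  | b :: t =>
    (b, (t.takeWhile (· = a)).length) :: chunka a (t.dropWhile (· = a))
  termination_by l => l.length
  decreasing_by
    simp only [List.length_cons]
    have := (List.dropWhile_sublist (l := t) (p := (· = a))).length_le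
    omega

def taua (a : Δ) : Δ × ℕ → List Δ := fun bk => bk.1 :: List.replicate bk.2 a

lemma takeWhile_eq_replicate (a : Δ) (t : List Δ) :
    t.takeWhile (· = a) = List.replicate (t.takeWhile (· = a)).length a := by
  apply List.eq_replicate_of_mem
  intro b hb
  have := List.mem_takeWhile_imp hb
  simpa using this

lemma chunka_flatMap (a : Δ) : ∀ l : List Δ, (chunka a l).flatMap (taua a) = l := by
  intro l
  induction l using chunka.induct (a := a) with
  | case1 => simp [chunka]
  | case2 b t ih =>
    rw [chunka]
    simp only [List.flatMap_cons, taua]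
    rw [ih]
    simp only [List.cons_append]
    rw [← takeWhile_eq_replicate]
    rw [List.takeWhile_append_dropWhile]

lemma takeWhile_append_of_head (a : Δ) (t w : List Δ) (hw : w.head? ≠ some a) :
    (t ++ w).takeWhile (· = a) = t.takeWhile (· = a) ∧
    (t ++ w).dropWhile (· = a) = t.dropWhile (· = a) ++ w := by
  have hwtake : w.takeWhile (· = a) = [] := by
    cases w with
    | nil => rfl
    | cons c cs =>
      simp only [List.head?_cons, ne_eq, Option.some.injEq] at hw
      simp [List.takeWhile_cons, hw]
  have hwdrop : w.dropWhile (· = a) = w := by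
    cases w with
    | nil => rfl
    | cons c cs =>
      simp only [List.head?_cons, ne_eq, Option.some.injEq] at hw
      simp [List.dropWhile_cons, hw]
  induction t with
  | nil =>
    refine ⟨?_, ?_⟩
    · rw [List.nil_append, hwtake]; rfl
    · rw [List.nil_append, hwdrop]; rfl
  | cons b t ih =>
    by_cases hb : b = a
    · subst hb
      simp only [List.cons_append, List.takeWhile_cons, List.dropWhile_cons]
      simp [ih.1, ih.2]
    · simp only [List.cons_append, List.takeWhile_cons, List.dropWhile_cons]
      simp [hb]

lemma chunka_append (a : Δ) (w : List Δ) (hw : w.head? ≠ some a) :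
    ∀ l : List Δ, chunka a (l ++ w) = chunka a l ++ chunka a w := by
  intro l
  induction l using chunka.induct (a := a) with
  | case1 => simp [chunka]
  | case2 b t ih =>
    rw [List.cons_append, chunka]
    rw [(takeWhile_append_of_head a t w hw).1, (takeWhile_append_of_head a t w hw).2]
    rw [ih]
    rw [chunka]
    simp

lemma chunka_head_ne (a : Δ) : ∀ l : List Δ, l.head? ≠ some a →
    ∀ bk ∈ chunka a l, bk.1 ≠ a := by
  intro l
  induction l using chunka.induct (a := a) with
  | case1 => intro _ bk hbk; simp [chunka] at hbk
  | case2 b t ih =>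
    intro hl bk hbk
    rw [chunka] at hbk
    rcases List.mem_cons.1 hbk with rfl | hbk
    · simpa using hl
    · apply ih ?_ bk hbk
      -- head of dropWhile satisfies ¬(· = a)
      generalize hd : t.dropWhile (· = a) = d
      cases d with
      | nil => simp
      | cons c cs =>
        have : ¬ (c = a) := by
          have := List.head?_dropWhile_not (· = a) t
          rw [hd] at this
          simpa using this
        simpa using this
end Chunk

section CardBound
variable {Ξ : Type} [Fintype Ξ]

lemma head_surj {Δ : Type} {T : Set (List Ξ × List Ξ)} (g : Ξ → List Δ)
    (hp : IsPrincipalSolution g T) :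
    ∀ a ∈ alph g, ∃ x t, g x = a :: t := by
  classical
  intro a ha
  by_contra hc
  push_neg at hc
  have hhead : ∀ x, (g x).head? ≠ some a := by
    intro x
    cases hgx : g x with
    | nil => simp
    | cons b t =>
      simp only [List.head?_cons, ne_eq, Option.some.injEq]
      intro hb
      exact hc x t (by rw [hgx, hb])
  -- the chunk solution
  set g' : Ξ → List (Δ × ℕ) := fun x => chunka a (g x) with hg'def
  have hflathead : ∀ u : List Ξ, (u.flatMap g).head? ≠ some a := by
    intro u
    induction u with
    | nil => simp
    | cons x u ih =>
      simp only [List.flatMap_cons]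
      cases hgx : g x with
      | nil => simpa using ih
      | cons b t =>
        have := hhead x
        rw [hgx] at this
        simpa using this
  have hgu : ∀ u : List Ξ, u.flatMap g' = chunka a (u.flatMap g) := by
    intro u
    induction u with
    | nil => simp [chunka]
    | cons x u ih =>
      simp only [List.flatMap_cons]
      rw [ih, chunka_append a _ (hflathead u)]
  have hsol' : IsSolution g' T := by
    intro e he
    rw [hgu e.1, hgu e.2, hp.1 e he]
  have hne' : ∀ bk ∈ alph g', taua a bk ≠ [] := by
    intro bk _
    simp [taua]
  have hdiv : ∀ x, g x = (g' x).flatMap (taua a) := fun x => (chunka_flatMap a (g x)).symm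
  have hren := hp.2 (Δ × ℕ) g' (taua a) hsol' hne' hdiv
  -- find the occurrence of `a`
  obtain ⟨x, hx⟩ := mem_alph.1 ha
  rw [hdiv x] at hx
  obtain ⟨bk, hbk, habk⟩ := List.mem_flatMap.1 hx
  have hbk' : bk ∈ alph g' := mem_alph.2 ⟨x, hbk⟩
  obtain ⟨c, hcs⟩ := hren.1 bk hbk'
  have hbne : bk.1 ≠ a := chunka_head_ne a (g x) (hhead x) bk hbk
  -- taua bk = [c] forces bk.2 = 0 and bk.1 = c
  have h2 : bk.2 = 0 := by
    have := congrArg List.length hcs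
    simp [taua] at this
    omega
  rw [taua, h2] at hcs
  simp only [List.replicate_zero] at hcs
  rw [taua, h2] at habk
  simp only [List.replicate_zero] at habk
  simp only [List.mem_singleton] at habk
  exact hbne habk.symm

lemma card_bound {Δ : Type} {T : Set (List Ξ × List Ξ)} (g : Ξ → List Δ)
    (hp : IsPrincipalSolution g T) (e : List Ξ × List Ξ) (heT : e ∈ T)
    (hne : e.1 ≠ e.2) :
    (alph g).Finite ∧ (alph g).ncard < Fintype.card Ξ := by
  classical
  refine ⟨alph_finite g, ?_⟩
  set f : Ξ → Option Δ := fun x => (g x).head? with hfdef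
  have hsurj : ∀ a ∈ alph g, ∃ x, f x = some a := by
    intro a ha
    obtain ⟨x, t, hx⟩ := head_surj g hp a ha
    exact ⟨x, by rw [hfdef]; simp [hx]⟩
  have himg : Option.some '' alph g ⊆ f '' Set.univ := by
    rintro b ⟨a, ha, rfl⟩
    obtain ⟨x, hx⟩ := hsurj a ha
    exact ⟨x, Set.mem_univ x, hx⟩
  have hcardeq : (alph g).ncard = (Option.some '' alph g).ncard :=
    (Set.ncard_image_of_injective _ (Option.some_injective Δ)).symm
  have hfinu : (f '' Set.univ).Finite := Set.toFinite _
  -- two cases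
  by_cases hz : ∃ z, g z = []
  · obtain ⟨z, hz⟩ := hz
    have hnone : none ∈ f '' Set.univ := ⟨z, Set.mem_univ z, by rw [hfdef]; simp [hz]⟩
    have hsub : Option.some '' alph g ⊆ (f '' Set.univ) \ {none} := by
      intro b hb
      refine ⟨himg hb, ?_⟩
      obtain ⟨a, _, rfl⟩ := hb
      simp
    calc (alph g).ncard = (Option.some '' alph g).ncard := hcardeq
      _ ≤ ((f '' Set.univ) \ {none}).ncard := Set.ncard_le_ncard hsub hfinu.diff
      _ < (f '' Set.univ).ncard := Set.ncard_diff_singleton_lt_of_mem hnone hfinu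
      _ ≤ (Set.univ : Set Ξ).ncard := Set.ncard_image_le (Set.finite_univ)
      _ = Fintype.card Ξ := by rw [Set.ncard_univ, Nat.card_eq_fintype_card]
  · push_neg at hz
    -- all images nonempty; find x ≠ y with equal heads from the nontrivial equation
    have hfirst : ∀ (u v : List Ξ), u ≠ v → u.flatMap g = v.flatMap g →
        ∃ x y, x ≠ y ∧ f x = f y := by
      intro u
      induction u with
      | nil =>
        intro v hne heq
        cases v with
        | nil => exact absurd rfl hne
        | cons y v =>
          exfalso
          simp only [List.flatMap_nil, List.flatMap_cons] at heq
          have h1 : g y ++ v.flatMap g = [] := heq.symm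
          simp only [List.append_eq_nil_iff] at h1
          exact hz y h1.1
      | cons x u ih =>
        intro v hne heq
        cases v with
        | nil =>
          exfalso
          simp only [List.flatMap_nil, List.flatMap_cons] at heq
          have h1 : g x ++ u.flatMap g = [] := heq
          have := hz x
          simp only [List.append_eq_nil_iff] at h1
          exact this h1.1
        | cons y v =>
          by_cases hxy : x = y
          · subst hxy
            simp only [List.flatMap_cons, List.append_cancel_left_eq] at heq
            apply ih v ?_ heq
            intro hc
            exact hne (by rw [hc])
          · refine ⟨x, y, hxy, ?_⟩
            simp only [List.flatMap_cons] at heq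
            rw [hfdef]
            dsimp only
            cases hgx : g x with
            | nil => exact absurd hgx (hz x)
            | cons b t =>
              cases hgy : g y with
              | nil => exact absurd hgy (hz y)
              | cons c s =>
                rw [hgx, hgy] at heq
                simp only [List.cons_append, List.cons.injEq] at heq
                rw [heq.1]
                simp
    obtain ⟨x, y, hxy, hfeq⟩ := hfirst e.1 e.2 hne (hp.1 e heT)
    have himg2 : f '' Set.univ = f '' (Set.univ \ {y}) := by
      apply Set.Subset.antisymm
      · rintro b ⟨w, _, rfl⟩
        by_cases hwy : w = y
        · exact ⟨x, ⟨Set.mem_univ x, by simp [hxy]⟩, by rw [hfeq, hwy]⟩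
        · exact ⟨w, ⟨Set.mem_univ w, by simp [hwy]⟩, rfl⟩
      · exact Set.image_mono Set.diff_subset
    calc (alph g).ncard = (Option.some '' alph g).ncard := hcardeq
      _ ≤ (f '' (Set.univ \ {y})).ncard := by
          rw [← himg2]
          exact Set.ncard_le_ncard himg hfinu
      _ ≤ (Set.univ \ {y} : Set Ξ).ncard := Set.ncard_image_le Set.finite_univ.diff
      _ < (Set.univ : Set Ξ).ncard :=
          Set.ncard_diff_singleton_lt_of_mem (Set.mem_univ y) Set.finite_univ
      _ = Fintype.card Ξ := by rw [Set.ncard_univ, Nat.card_eq_fintype_card]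
end CardBound
section Empty
variable {Ξ Δ : Type*}

lemma flatMap_nil_fun (l : List Ξ) : l.flatMap (fun _ => ([] : List Δ)) = [] := by
  induction l with
  | nil => rfl
  | cons a t ih => simp [ih]

lemma alph_nil_fun : alph (fun _ : Ξ => ([] : List Δ)) = ∅ := by
  ext a
  simp [mem_alph]

lemma nil_principal {Ξ Δ : Type*} (T : Set (List Ξ × List Ξ)) :
    IsPrincipalSolution (fun _ : Ξ => ([] : List Δ)) T := by
  constructor
  · intro e _
    rw [flatMap_nil_fun, flatMap_nil_fun]
  · intro Δ' g' θ hsol' hne hdiv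
    have hg' : ∀ x, g' x = [] := fun x =>
      eq_nil_of_flatMap_eq_nil (hdiv x).symm fun a ha => hne a (mem_alph.2 ⟨x, ha⟩)
    have halph : alph g' = ∅ := by
      ext a
      simp [mem_alph, hg']
    rw [halph]
    exact ⟨fun a ha => absurd ha (Set.notMem_empty a),
      fun a ha => absurd ha (Set.notMem_empty a)⟩

lemma zip_flatMap {Ξ Sig Sig₂ : Type*} (h : Ξ → List Sig) (h₂ : Ξ → List Sig₂)
    (hlen : ∀ x, (h x).length = (h₂ x).length) (u : List Ξ) :
    u.flatMap (fun x => (h x).zip (h₂ x)) = (u.flatMap h).zip (u.flatMap h₂) := by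
  induction u with
  | nil => simp
  | cons x u ih =>
    simp only [List.flatMap_cons]
    rw [ih, List.zip_append (hlen x)]

end Empty


/-- Theorem on principal solutions. -/
theorem principal_solution_exists_unique {Ξ Sig : Type} [Fintype Ξ]
    (T : Set (List Ξ × List Ξ))
    (hT : (⋃ e ∈ T, {a | a ∈ e.1 ++ e.2}) = (Set.univ : Set Ξ))
    (h : Ξ → List Sig) (hsol : IsSolution h T) :
    ∃ (Δ : Type) (g : Ξ → List Δ) (θ : Δ → List Sig),
      IsPrincipalSolution g T ∧
      (∀ a ∈ alph g, θ a ≠ []) ∧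
      (∀ x, h x = (g x).flatMap θ) ∧
      -- uniqueness up to renaming of letters:
      (∀ (Δ' : Type) (g' : Ξ → List Δ') (θ' : Δ' → List Sig),
        IsPrincipalSolution g' T → (∀ a ∈ alph g', θ' a ≠ []) →
        (∀ x, h x = (g' x).flatMap θ') →
        ∃ ρ : Δ → Δ', Set.InjOn ρ (alph g) ∧ ρ '' alph g = alph g' ∧
          (∀ x, g' x = (g x).map ρ) ∧
          (∀ a ∈ alph g, θ' (ρ a) = θ a)) ∧
      -- (i) if `T` is not trivial then `|alph g| < |alph T| = |Ξ|`:
      ((¬ ∀ e ∈ T, e.1 = e.2) → (alph g).Finite ∧ (alph g).ncard < Fintype.card Ξ) ∧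
      -- (ii) solutions with the same length type have the same principal solution up to
      -- renaming, and the associated morphisms have the same length type:
      (∀ (Sig₂ Δ₂ : Type) (h₂ : Ξ → List Sig₂) (g₂ : Ξ → List Δ₂) (θ₂ : Δ₂ → List Sig₂),
        IsSolution h₂ T → (∀ x, (h x).length = (h₂ x).length) →
        IsPrincipalSolution g₂ T → (∀ a ∈ alph g₂, θ₂ a ≠ []) →
        (∀ x, h₂ x = (g₂ x).flatMap θ₂) →
        ∃ ρ : Δ → Δ₂, Set.InjOn ρ (alph g) ∧ ρ '' alph g = alph g₂ ∧
          (∀ x, g₂ x = (g x).map ρ) ∧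
          (∀ a ∈ alph g, (θ₂ (ρ a)).length = (θ a).length)) := by
  classical
  by_cases hempty : ∀ x, h x = []
  · -- degenerate case: the empty solution
    refine ⟨Empty, fun _ => [], fun a => a.elim, nil_principal T,
      fun a _ => a.elim, fun x => by rw [hempty x]; rfl, ?_, ?_, ?_⟩
    · -- uniqueness
      intro Δ' g' θ' hp' hne' hdiv'
      have hg' : ∀ x, g' x = [] := fun x =>
        eq_nil_of_flatMap_eq_nil ((hdiv' x).symm.trans (hempty x))
          fun a ha => hne' a (mem_alph.2 ⟨x, ha⟩)
      have halph' : alph g' = ∅ := by ext a; simp [mem_alph, hg']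
      refine ⟨fun a => a.elim, ?_, ?_, fun x => by rw [hg' x]; simp, ?_⟩
      · rw [alph_nil_fun]; exact Set.injOn_empty _
      · rw [alph_nil_fun, halph', Set.image_empty]
      · rw [alph_nil_fun]; intro a ha; exact absurd ha (Set.notMem_empty a)
    · -- cardinality
      intro hnt
      push_neg at hnt
      obtain ⟨e, heT, hene⟩ := hnt
      have hΞ : Nonempty Ξ := by
        by_contra hc
        rw [not_nonempty_iff] at hc
        have hnil : ∀ l : List Ξ, l = [] := by
          intro l
          cases l with
          | nil => rfl
          | cons x t => exact (hc.false x).elim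
        exact hene ((hnil e.1).trans (hnil e.2).symm)
      rw [alph_nil_fun]
      exact ⟨Set.finite_empty, by rw [Set.ncard_empty]; exact Fintype.card_pos⟩
    · -- same length type
      intro Sig₂ Δ₂ h₂ g₂ θ₂ hsol₂ hlen hp₂ hne₂ hdiv₂
      have hh₂ : ∀ x, h₂ x = [] := by
        intro x
        have := hlen x
        rw [hempty x] at this
        simpa using (List.length_eq_zero_iff.1 this.symm)
      have hg₂ : ∀ x, g₂ x = [] := fun x =>
        eq_nil_of_flatMap_eq_nil ((hdiv₂ x).symm.trans (hh₂ x))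
          fun a ha => hne₂ a (mem_alph.2 ⟨x, ha⟩)
      have halph₂ : alph g₂ = ∅ := by ext a; simp [mem_alph, hg₂]
      refine ⟨fun a => a.elim, ?_, ?_, fun x => by rw [hg₂ x]; simp, ?_⟩
      · rw [alph_nil_fun]; exact Set.injOn_empty _
      · rw [alph_nil_fun, halph₂, Set.image_empty]
      · rw [alph_nil_fun]; intro a ha; exact absurd ha (Set.notMem_empty a)
  · -- main case
    push_neg at hempty
    obtain ⟨x₀, hx₀⟩ := hempty
    obtain ⟨Δ, g, θ, hp, hθ, hdiv⟩ := lemmaA T (msr h) Sig h le_rfl hsol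
    have hgx₀ : g x₀ ≠ [] := by
      intro hc
      apply hx₀
      rw [hdiv x₀, hc]
      rfl
    refine ⟨Δ, g, θ, hp, fun a _ => hθ a, hdiv, ?_, ?_, ?_⟩
    · -- uniqueness
      intro Δ' g' θ' hp' hne' hdiv'
      have hg'x₀ : g' x₀ ≠ [] := by
        intro hc
        apply hx₀
        rw [hdiv' x₀, hc]
        rfl
      have hnem : Nonempty Δ' := by
        cases hgg : g' x₀ with
        | nil => exact absurd hgg hg'x₀
        | cons b t => exact ⟨b⟩
      exact lemmaB hnem g θ g' θ' hp hp' (fun a _ => hθ a) hne'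
        (fun x => (hdiv x).symm.trans (hdiv' x))
    · -- cardinality
      intro hnt
      push_neg at hnt
      obtain ⟨e, heT, hene⟩ := hnt
      exact card_bound g hp e heT hene
    · -- same length type
      intro Sig₂ Δ₂ h₂ g₂ θ₂ hsol₂ hlen hp₂ hne₂ hdiv₂
      set hz : Ξ → List (Sig × Sig₂) := fun x => (h x).zip (h₂ x) with hzdef
      have hsolz : IsSolution hz T := by
        intro e he
        rw [hzdef, zip_flatMap h h₂ hlen e.1, zip_flatMap h h₂ hlen e.2, hsol e he, hsol₂ e he]
      obtain ⟨Δm, pm, τm, hpm, hτm, hdivm⟩ := lemmaA T (msr hz) (Sig × Sig₂) hz le_rfl hsolz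
      have hzx : ∀ x, (hz x).map Prod.fst = h x := fun x =>
        List.map_fst_zip (le_of_eq (hlen x))
      have hzx₂ : ∀ x, (hz x).map Prod.snd = h₂ x := fun x =>
        List.map_snd_zip (le_of_eq (hlen x).symm)
      set π₁ : Δm → List Sig := fun c => (τm c).map Prod.fst with hπ₁def
      set π₂ : Δm → List Sig₂ := fun c => (τm c).map Prod.snd with hπ₂def
      have hπ₁div : ∀ x, h x = (pm x).flatMap π₁ := by
        intro x
        rw [hπ₁def, ← List.map_flatMap, ← hdivm x, hzx x]
      have hπ₂div : ∀ x, h₂ x = (pm x).flatMap π₂ := by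
        intro x
        rw [hπ₂def, ← List.map_flatMap, ← hdivm x, hzx₂ x]
      have hpmx₀ : pm x₀ ≠ [] := by
        intro hc
        apply hx₀
        rw [hπ₁div x₀, hc]
        rfl
      have hnem : Nonempty Δm := by
        cases hgg : pm x₀ with
        | nil => exact absurd hgg hpmx₀
        | cons b t => exact ⟨b⟩
      have hπ₁ne : ∀ c ∈ alph pm, π₁ c ≠ [] := by
        intro c _
        rw [hπ₁def]
        simpa using hτm c
      have hπ₂ne : ∀ c ∈ alph pm, π₂ c ≠ [] := by
        intro c _
        rw [hπ₂def]
        simpa using hτm c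
      obtain ⟨ρ₁, inj₁, img₁, map₁, compat₁⟩ :=
        lemmaB hnem g θ pm π₁ hp hpm (fun a _ => hθ a) hπ₁ne
          (fun x => (hdiv x).symm.trans (hπ₁div x))
      have hg₂x₀ : g₂ x₀ ≠ [] := by
        intro hc
        have hh₂x₀ : h₂ x₀ ≠ [] := by
          intro hc2
          apply hx₀
          have := hlen x₀
          rw [hc2] at this
          simpa using List.length_eq_zero_iff.1 this
        apply hh₂x₀
        rw [hdiv₂ x₀, hc]
        rfl
      have hnem₂ : Nonempty Δ₂ := by
        cases hgg : g₂ x₀ with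
        | nil => exact absurd hgg hg₂x₀
        | cons b t => exact ⟨b⟩
      obtain ⟨ρ₂, inj₂, img₂, map₂, compat₂⟩ :=
        lemmaB hnem₂ pm π₂ g₂ θ₂ hpm hp₂ hπ₂ne hne₂
          (fun x => (hπ₂div x).symm.trans (hdiv₂ x))
      refine ⟨ρ₂ ∘ ρ₁, ?_, ?_, ?_, ?_⟩
      · exact inj₂.comp inj₁ (fun a ha => img₁ ▸ Set.mem_image_of_mem ρ₁ ha)
      · rw [Set.image_comp, img₁, img₂]
      · intro x
        rw [map₂ x, map₁ x, List.map_map]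
      · intro a ha
        have hρ₁a : ρ₁ a ∈ alph pm := img₁ ▸ Set.mem_image_of_mem ρ₁ ha
        have h1 := compat₂ (ρ₁ a) hρ₁a
        have h2 := compat₁ a ha
        rw [Function.comp_apply, h1, ← h2, hπ₁def, hπ₂def]
        simp

end WordEquations
end

section
/- Let g be a principal solution of a system T of word equations in n unknowns. Then the rank of g equals the cardinality of alp(g). Moreover, if h = θ∘g for a morphism θ, then the rank of h is at most the rank of g. -/
open scoped BigOperators

namespace WordEquations

set_option linter.unusedSectionVars false

section Cut

variable {Δ : Type} [DecidableEq Δ]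

/-- The `lam`-weight of a word. -/
def wt (lam : Δ → ℚ) (w : List Δ) : ℚ := (w.map lam).sum

lemma wt_append (lam : Δ → ℚ) (u v : List Δ) : wt lam (u ++ v) = wt lam u + wt lam v := by
  simp [wt]

/-- Cut a word into pieces at every position where the prefix weight returns to zero. -/
def cutAux (lam : Δ → ℚ) : List Δ → List Δ → List (List Δ)
  | [], acc => if acc = [] then [] else [acc]
  | c :: rest, acc =>
      if wt lam (acc ++ [c]) = 0 then (acc ++ [c]) :: cutAux lam rest []
      else cutAux lam rest (acc ++ [c])

lemma cutAux_flatten (lam : Δ → ℚ) : ∀ (w acc : List Δ),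
    (cutAux lam w acc).flatMap (fun p => p) = acc ++ w := by
  intro w
  induction w with
  | nil => intro acc; by_cases h : acc = [] <;> simp [cutAux, h]
  | cons c rest ih =>
    intro acc
    by_cases h : wt lam (acc ++ [c]) = 0 <;> simp [cutAux, h, ih]

lemma cutAux_ne_nil (lam : Δ → ℚ) : ∀ (w acc : List Δ), ∀ p ∈ cutAux lam w acc, p ≠ [] := by
  intro w
  induction w with
  | nil =>
    intro acc p hp
    by_cases h : acc = []
    · simp [cutAux, h] at hp
    · simp [cutAux, h] at hp; simpa [hp] using h
  | cons c rest ih =>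
    intro acc p hp
    by_cases h : wt lam (acc ++ [c]) = 0
    · simp only [cutAux, h, if_pos, List.mem_cons] at hp
      rcases hp with hp | hp
      · simp [hp]
      · exact ih [] p hp
    · simp only [cutAux, h, if_neg, not_false_iff] at hp
      exact ih _ p hp

lemma cutAux_append (lam : Δ → ℚ) (v : List Δ) : ∀ (w acc : List Δ),
    (acc = [] ∨ wt lam acc ≠ 0) → wt lam (acc ++ w) = 0 →
    cutAux lam (w ++ v) acc = cutAux lam w acc ++ cutAux lam v [] := by
  intro w
  induction w with
  | nil =>
    intro acc hinv h0
    have hacc : acc = [] := by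
      rcases hinv with h | h
      · exact h
      · exact absurd (by simpa [wt] using h0) h
    subst hacc
    simp [cutAux]
  | cons c rest ih =>
    intro acc hinv h0
    have hassoc : acc ++ c :: rest = (acc ++ [c]) ++ rest := by simp
    by_cases h : wt lam (acc ++ [c]) = 0
    · have h0' : wt lam rest = 0 := by
        rw [hassoc, wt_append, h] at h0; linarith
      show cutAux lam (c :: (rest ++ v)) acc = _
      simp only [cutAux, h, if_pos]
      rw [ih [] (Or.inl rfl) (by simpa using h0')]
      simp [cutAux, h]
    · show cutAux lam (c :: (rest ++ v)) acc = _
      simp only [cutAux, h, if_neg, not_false_iff]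
      rw [ih (acc ++ [c]) (Or.inr h) (by rw [← hassoc]; exact h0)]

lemma cutAux_singletons (lam : Δ → ℚ) : ∀ (w acc : List Δ),
    (acc = [] ∨ wt lam acc ≠ 0) → wt lam (acc ++ w) = 0 →
    (∀ p ∈ cutAux lam w acc, ∃ b, p = [b]) →
    (∀ a ∈ w, lam a = 0) ∧ acc = [] := by
  intro w
  induction w with
  | nil =>
    intro acc hinv h0 _
    have hacc : acc = [] := by
      rcases hinv with h | h
      · exact h
      · exact absurd (by simpa [wt] using h0) h
    exact ⟨by simp, hacc⟩
  | cons c rest ih =>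
    intro acc hinv h0 hsing
    have hassoc : acc ++ c :: rest = (acc ++ [c]) ++ rest := by simp
    by_cases h : wt lam (acc ++ [c]) = 0
    · have hp : acc ++ [c] ∈ cutAux lam (c :: rest) acc := by
        simp [cutAux, h]
      obtain ⟨b, hb⟩ := hsing _ hp
      have hacc : acc = [] := by
        have hlen := congrArg List.length hb
        simpa using hlen
      subst hacc
      have hc : lam c = 0 := by simpa [wt] using h
      have h0' : wt lam rest = 0 := by
        rw [hassoc, wt_append, h] at h0; linarith
      have ihres := ih [] (Or.inl rfl) (by simpa using h0')
        (fun p hp' => hsing p (by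
          show p ∈ cutAux lam (c :: rest) []
          simp only [cutAux]
          rw [if_pos (by simpa using h)]
          simp [hp']))
      refine ⟨?_, rfl⟩
      intro a ha
      rcases List.mem_cons.1 ha with rfl | ha'
      · exact hc
      · exact ihres.1 a ha'
    · have ihres := ih (acc ++ [c]) (Or.inr h)
        (by rw [← hassoc]; exact h0)
        (fun p hp' => hsing p (by simp [cutAux, h, hp']))
      exact absurd ihres.2 (by simp)

lemma cut_flatMap {Ξ : Type*} (lam : Δ → ℚ) (g : Ξ → List Δ)
    (hg0 : ∀ x, wt lam (g x) = 0) :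
    ∀ u : List Ξ, cutAux lam (u.flatMap g) [] = u.flatMap (fun x => cutAux lam (g x) []) := by
  intro u
  induction u with
  | nil => simp [cutAux]
  | cons x u ih =>
    rw [List.flatMap_cons, List.flatMap_cons,
      cutAux_append lam _ (g x) [] (Or.inl rfl) (by simpa using hg0 x), ih]

lemma no_relation {n : ℕ} {T : Set (List (Fin n) × List (Fin n))} {g : Fin n → List Δ}
    (hg : IsPrincipalSolution g T) (lam : Δ → ℚ)
    (h0 : ∀ x, wt lam (g x) = 0) : ∀ a ∈ alph g, lam a = 0 := by
  set g' : Fin n → List (List Δ) := fun x => cutAux lam (g x) [] with hg'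
  have sol' : IsSolution g' T := by
    intro e he
    have h1 := hg.1 e he
    show e.1.flatMap g' = e.2.flatMap g'
    rw [hg']
    rw [← cut_flatMap lam g h0 e.1, ← cut_flatMap lam g h0 e.2, h1]
  have hmem : ∀ x p, p ∈ g' x → p ∈ alph g' := fun x p hp => Set.mem_iUnion.2 ⟨x, hp⟩
  have ren := hg.2 (List Δ) g' (fun w => w) sol'
      (fun p hp => by
        obtain ⟨x, hx⟩ := Set.mem_iUnion.1 hp
        exact cutAux_ne_nil lam (g x) [] p hx)
      (fun x => by simpa using (cutAux_flatten lam (g x) []).symm)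
  intro a ha
  obtain ⟨x, hx⟩ := Set.mem_iUnion.1 ha
  have hs := cutAux_singletons lam (g x) [] (Or.inl rfl) (by simpa using h0 x)
      (fun p hp => ren.1 p (hmem x p hp))
  exact hs.1 a hx

end Cut

section Counting

variable {Δ Sig : Type} [Fintype Δ] [DecidableEq Δ] [DecidableEq Sig]

lemma wt_eq_sum (lam : Δ → ℚ) (w : List Δ) :
    wt lam w = ∑ a : Δ, lam a * (w.count a : ℚ) := by
  induction w with
  | nil => simp [wt]
  | cons c w ih =>
    have h1 : wt lam (c :: w) = lam c + wt lam w := by simp [wt]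
    rw [h1, ih]
    have h2 : ∀ a : Δ, (((c :: w).count a : ℚ)) = (w.count a : ℚ) + if a = c then 1 else 0 := by
      intro a
      rw [List.count_cons]
      rcases eq_or_ne a c with hac | hac
      · simp [hac]
      · simp [hac, Ne.symm hac]
    simp only [h2, mul_add, Finset.sum_add_distrib, mul_ite, mul_one, mul_zero,
      Finset.sum_ite_eq', Finset.mem_univ, if_true]
    ring

lemma count_flatMap (θ : Δ → List Sig) (l : List Δ) (b : Sig) :
    ((l.flatMap θ).count b : ℚ) = ∑ a : Δ, (l.count a : ℚ) * ((θ a).count b : ℚ) := by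
  induction l with
  | nil => simp
  | cons c l ih =>
    rw [List.flatMap_cons, List.count_append]
    push_cast
    rw [ih]
    have h2 : ∀ a : Δ, (((c :: l).count a : ℚ)) = (l.count a : ℚ) + if a = c then 1 else 0 := by
      intro a
      rw [List.count_cons]
      rcases eq_or_ne a c with hac | hac
      · simp [hac]
      · simp [hac, Ne.symm hac]
    simp only [h2, add_mul, Finset.sum_add_distrib, ite_mul, one_mul, zero_mul,
      Finset.sum_ite_eq', Finset.mem_univ, if_true]
    ring

end Counting

/-- the rank of a principal solution `g` equals `|alph g|`, and the rank of
any `h = θ ∘ g` is at most the rank of `g`. -/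
theorem rank_of_principal_solution {n : ℕ} {Δ Sig : Type}
    [Fintype Δ] [DecidableEq Δ] [Fintype Sig] [DecidableEq Sig]
    (T : Set (List (Fin n) × List (Fin n)))
    (g : Fin n → List Δ) (hg : IsPrincipalSolution g T)
    (θ : Δ → List Sig) (h : Fin n → List Sig)
    (hh : ∀ x, h x = (g x).flatMap θ) :
    morphRank g = (alph g).ncard ∧ morphRank h ≤ morphRank g := by
  classical
  -- Part 2
  have hle : GammaSpace h ≤ GammaSpace g := by
    rw [GammaSpace, Submodule.span_le]
    rintro v ⟨b, rfl⟩
    have hv : gamVec h b = ∑ a : Δ, ((θ a).count b : ℚ) • gamVec g a := by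
      funext j
      simp only [Finset.sum_apply, Pi.smul_apply, smul_eq_mul, gamVec]
      rw [hh j, count_flatMap θ (g j) b]
      exact Finset.sum_congr rfl fun a _ => by ring
    rw [hv]
    exact Submodule.sum_mem _ fun a _ =>
      Submodule.smul_mem _ _ (Submodule.subset_span ⟨a, rfl⟩)
  have part2 : morphRank h ≤ morphRank g := Submodule.finrank_mono hle
  -- Part 1
  have hA : (alph g).Finite := Set.toFinite _
  set A : Finset Δ := hA.toFinset with hAdef
  have hmemA : ∀ a, a ∈ A ↔ a ∈ alph g := fun a => Set.Finite.mem_toFinset hA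
  have hzero : ∀ a : Δ, a ∉ alph g → gamVec g a = 0 := by
    intro a ha
    funext j
    have hnm : a ∉ g j := fun h' => ha (Set.mem_iUnion.2 ⟨j, h'⟩)
    simp [gamVec, List.count_eq_zero_of_not_mem hnm]
  have indep : LinearIndependent ℚ (fun i : ↥A => gamVec g ↑i) := by
    rw [Fintype.linearIndependent_iff]
    intro c hc i
    set lam : Δ → ℚ := fun a => if hx : a ∈ A then c ⟨a, hx⟩ else 0 with hlam
    have hlamA : ∀ i : ↥A, lam ↑i = c i := fun i => dif_pos i.2
    have hsum : ∀ x : Fin n, wt lam (g x) = 0 := by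
      intro x
      rw [wt_eq_sum]
      have h1 : ∑ a : Δ, lam a * ((g x).count a : ℚ) = ∑ a ∈ A, lam a * ((g x).count a : ℚ) := by
        symm
        apply Finset.sum_subset (Finset.subset_univ A)
        intro a _ haA
        rw [hlam]
        simp [dif_neg haA]
      have hcx := congrFun hc x
      simp only [Finset.sum_apply, Pi.smul_apply, smul_eq_mul, Pi.zero_apply, gamVec] at hcx
      rw [h1, ← Finset.sum_coe_sort]
      calc ∑ i : ↥A, lam ↑i * ((g x).count ↑i : ℚ)
          = ∑ i : ↥A, c i * ((g x).count ↑i : ℚ) :=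
            Finset.sum_congr rfl fun i _ => by rw [hlamA]
        _ = 0 := hcx
    have hz := no_relation hg lam hsum
    have hz' : lam ↑i = 0 := hz ↑i ((hmemA ↑i).1 i.2)
    rwa [hlamA] at hz'
  have hrange : Set.range (fun i : ↥A => gamVec g ↑i) = gamVec g '' (alph g) := by
    ext v
    constructor
    · rintro ⟨i, rfl⟩
      exact ⟨↑i, (hmemA ↑i).1 i.2, rfl⟩
    · rintro ⟨a, ha, rfl⟩
      exact ⟨⟨a, (hmemA a).2 ha⟩, rfl⟩
  have hspan : GammaSpace g = Submodule.span ℚ (gamVec g '' (alph g)) := by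
    apply le_antisymm
    · rw [GammaSpace, Submodule.span_le]
      rintro v ⟨a, rfl⟩
      by_cases ha : a ∈ alph g
      · exact Submodule.subset_span ⟨a, ha, rfl⟩
      · rw [hzero a ha]; exact Submodule.zero_mem _
    · exact Submodule.span_mono (by rintro v ⟨a, _, rfl⟩; exact ⟨a, rfl⟩)
  have hcard := finrank_span_eq_card indep
  rw [hrange] at hcard
  have part1 : morphRank g = (alph g).ncard := by
    rw [morphRank, hspan, hcard, Fintype.card_coe, Set.ncard_eq_toFinset_card _ hA]
  exact ⟨part1, part2⟩


end WordEquations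
end

section
/- If h : {x₁,…,xₙ}* → {a₁,…,a_k}* is a morphism of rank r, then the set L_h = { L(θ_α ∘ h) : α ∈ ℕ₀^k } ⊆ ℤⁿ has rank r; that is, the ℚ-span of L_h has dimension r and L_h is not contained in any finite union of (r−1)-dimensional ℚ-subspaces of its span. -/
open scoped BigOperators

namespace WordEquations

/-- for a morphism `h` of rank `r`, the set
`L_h = { L(θ_α ∘ h) : α ∈ ℕ₀^k }` has rank `r`. -/
theorem hasRank_lengthTypes {n k : ℕ} (h : Fin n → List (Fin k)) (r : ℕ)
    (hr : morphRank h = r) :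
    HasRank {v : Fin n → ℚ | ∃ α : Fin k → ℕ, ∀ x, v x = ((powLenType α h x : ℕ) : ℚ)} r := by
  classical
  set M := {v : Fin n → ℚ | ∃ α : Fin k → ℕ, ∀ x, v x = ((powLenType α h x : ℕ) : ℚ)} with hMdef
  set T : (Fin k → ℚ) →ₗ[ℚ] (Fin n → ℚ) := Fintype.linearCombination ℚ (gamVec h) with hTdef
  have hTapp : ∀ (β : Fin k → ℚ) (x : Fin n), T β x = ∑ a, β a * gamVec h a x := by
    intro β x
    rw [hTdef, Fintype.linearCombination_apply]
    simp
  -- elements of M are images under T of nonnegative integer vectors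
  have hmem : ∀ α : Fin k → ℕ,
      (fun x => ((powLenType α h x : ℕ) : ℚ)) = T (fun a => (α a : ℚ)) := by
    intro α
    funext x
    rw [hTapp]
    unfold powLenType gamVec
    push_cast
    rfl
  have hMT : ∀ v ∈ M, ∃ β : Fin k → ℚ, v = T β := by
    rintro v ⟨α, hα⟩
    refine ⟨fun a => (α a : ℚ), ?_⟩
    funext x
    rw [hα x]
    exact congrFun (hmem α) x
  -- the span of M equals GammaSpace h
  have hrange : LinearMap.range T = GammaSpace h := by
    rw [hTdef, Fintype.range_linearCombination]; rfl
  have hspan : Submodule.span ℚ M = GammaSpace h := by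
    apply le_antisymm
    · rw [Submodule.span_le]
      intro v hv
      obtain ⟨β, rfl⟩ := hMT v hv
      rw [← hrange]
      exact ⟨β, rfl⟩
    · rw [GammaSpace, Submodule.span_le]
      rintro _ ⟨a, rfl⟩
      apply Submodule.subset_span
      refine ⟨fun b => if b = a then 1 else 0, fun x => ?_⟩
      unfold powLenType gamVec
      push_cast
      simp [ite_mul]
  have hfr : Module.finrank ℚ ↥(Submodule.span ℚ M) = r := by
    rw [hspan]; exact hr
  refine ⟨hfr, ?_⟩
  intro V hV hsub
  -- for each W in V, produce a nonzero polynomial vanishing whenever the Vandermonde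
  -- point lands in W
  have key : ∀ W ∈ V, ∃ p : Polynomial ℚ, p ≠ 0 ∧
      ∀ t : ℚ, T (fun j => t ^ (j : ℕ)) ∈ W → Polynomial.eval t p = 0 := by
    intro W hW
    obtain ⟨hWle, hWfr⟩ := hV W hW
    -- W is a proper subspace of span M
    have hne : W ≠ Submodule.span ℚ M := by
      intro hEq
      rw [hEq, hfr] at hWfr
      omega
    have hlt : W < Submodule.span ℚ M := lt_of_le_of_ne hWle hne
    obtain ⟨v, hvspan, hvW⟩ := SetLike.exists_of_lt hlt
    -- a dual functional vanishing on W but not at v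
    have hmk : Submodule.Quotient.mk (p := W) v ≠ 0 := by
      intro h0
      exact hvW ((Submodule.Quotient.mk_eq_zero W).mp h0)
    have : ¬ ∀ φ : Module.Dual ℚ ((Fin n → ℚ) ⧸ W), φ (Submodule.Quotient.mk v) = 0 := by
      rw [Module.forall_dual_apply_eq_zero_iff]; exact hmk
    push_neg at this
    obtain ⟨φ, hφ⟩ := this
    set f : (Fin n → ℚ) →ₗ[ℚ] ℚ := φ.comp W.mkQ with hfdef
    have hfW : ∀ w ∈ W, f w = 0 := by
      intro w hw
      simp only [hfdef, LinearMap.comp_apply, Submodule.mkQ_apply]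
      rw [(Submodule.Quotient.mk_eq_zero W).mpr hw, map_zero]
    have hfv : f v ≠ 0 := hφ
    set g : (Fin k → ℚ) →ₗ[ℚ] ℚ := f.comp T with hgdef
    -- g evaluated at vandermonde points is a polynomial
    set p : Polynomial ℚ :=
      ∑ j : Fin k, Polynomial.C (g (fun i => if j = i then 1 else 0)) * Polynomial.X ^ (j : ℕ)
      with hpdef
    have heval : ∀ t : ℚ, Polynomial.eval t p = g (fun j => t ^ (j : ℕ)) := by
      intro t
      rw [hpdef]
      have hdecomp : (fun j : Fin k => t ^ (j : ℕ))
          = ∑ j : Fin k, (t ^ (j : ℕ)) • (fun i => if j = i then (1:ℚ) else 0) :=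
        pi_eq_sum_univ _
      rw [hdecomp, map_sum]
      simp only [map_smul, smul_eq_mul]
      rw [Polynomial.eval_finset_sum]
      refine Finset.sum_congr rfl fun j _ => ?_
      rw [Polynomial.eval_mul, Polynomial.eval_C, Polynomial.eval_pow, Polynomial.eval_X,
        mul_comm]
    have hgsingle : ∀ j : Fin k, p.coeff (j : ℕ) = g (fun i => if j = i then 1 else 0) := by
      intro j
      rw [hpdef, Polynomial.finset_sum_coeff]
      rw [Finset.sum_eq_single j]
      · simp
      · intro b _ hbj
        have : (b : ℕ) ≠ (j : ℕ) := fun hc => hbj (Fin.val_injective hc)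
        simp [Polynomial.coeff_X_pow, Ne.symm this]
      · simp
    refine ⟨p, ?_, ?_⟩
    · -- p ≠ 0: otherwise g = 0, contradicting g(β) = f(v) ≠ 0
      intro hp0
      have hg0 : ∀ β : Fin k → ℚ, g β = 0 := by
        intro β
        have hβ : β = ∑ j : Fin k, (β j) • (fun i => if j = i then (1:ℚ) else 0) :=
          pi_eq_sum_univ _
        rw [hβ, map_sum]
        apply Finset.sum_eq_zero
        intro j _
        rw [map_smul, ← hgsingle j, hp0]
        simp
      -- but v ∈ span M = range T
      have hvr : v ∈ LinearMap.range T := by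
        rw [hrange, ← hspan]; exact hvspan
      obtain ⟨β, hβ⟩ := hvr
      apply hfv
      rw [← hβ]
      exact hg0 β
    · intro t hTt
      rw [heval t]
      exact hfW _ hTt
  -- choose the polynomials
  choose! p hp0 hpvan using key
  set P : Polynomial ℚ := ∏ W ∈ V, p W with hPdef
  have hP0 : P ≠ 0 := Finset.prod_ne_zero_iff.mpr (fun W hW => hp0 W hW)
  -- pick a natural number t avoiding the finitely many roots of P
  have hroots : {t : ℚ | P.IsRoot t}.Finite := Polynomial.finite_setOf_isRoot hP0
  have hinfinite : (Set.range ((↑) : ℕ → ℚ)).Infinite :=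
    Set.infinite_range_of_injective Nat.cast_injective
  obtain ⟨t, htr, htn⟩ := (hinfinite.diff hroots).nonempty
  obtain ⟨m, rfl⟩ := htr
  -- the corresponding element of M
  set α : Fin k → ℕ := fun a => m ^ (a : ℕ) with hαdef
  have hvM : (fun x => ((powLenType α h x : ℕ) : ℚ)) ∈ M := ⟨α, fun x => rfl⟩
  have hvim := hsub hvM
  rw [Set.mem_iUnion₂] at hvim
  obtain ⟨W, hW, hvW⟩ := hvim
  have hcast : (fun a : Fin k => ((α a : ℕ) : ℚ)) = fun j : Fin k => ((m : ℚ)) ^ (j : ℕ) := by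
    funext a; rw [hαdef]; push_cast; rfl
  have hvW' : T (fun j => ((m : ℚ)) ^ (j : ℕ)) ∈ W := by
    rw [← hcast, ← hmem α]; exact hvW
  have hzero : Polynomial.eval ((m : ℚ)) (p W) = 0 := hpvan W hW _ hvW'
  apply htn
  show P.IsRoot _
  rw [Polynomial.IsRoot, hPdef, Polynomial.eval_prod]
  exact Finset.prod_eq_zero hW hzero

end WordEquations
end

section
/- If ℒ = ⋃_{i≤k} ℒᵢ ⊆ ℚⁿ is a finite union of sets such that ℒ has rank r and each ℒᵢ satisfies ℒᵢℕ ⊆ ℒᵢ, then there exists an index i such that ℒᵢ has rank r. -/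
open scoped BigOperators

namespace WordEquations

lemma exists_between_finrank {n : ℕ} (U W₀ : Submodule ℚ (Fin n → ℚ)) (hle : W₀ ≤ U)
    (m : ℕ) (h1 : Module.finrank ℚ ↥W₀ ≤ m) (h2 : m ≤ Module.finrank ℚ ↥U) :
    ∃ W : Submodule ℚ (Fin n → ℚ), W₀ ≤ W ∧ W ≤ U ∧ Module.finrank ℚ ↥W = m := by
  induction m with
  | zero =>
    refine ⟨W₀, le_rfl, hle, le_antisymm h1 (Nat.zero_le _)⟩
  | succ m ih =>
    rcases Nat.lt_or_ge (Module.finrank ℚ ↥W₀) (m + 1) with hlt | hge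
    · obtain ⟨W, hW₀, hWU, hWm⟩ := ih (Nat.lt_succ_iff.mp hlt) (Nat.le_of_succ_le h2)
      have hWltU : W < U := by
        rcases lt_or_eq_of_le hWU with h | h
        · exact h
        · exfalso; rw [h] at hWm; omega
      obtain ⟨x, hxU, hxW⟩ := SetLike.exists_of_lt hWltU
      have hx0 : x ≠ 0 := fun h => hxW (h ▸ W.zero_mem)
      refine ⟨W ⊔ Submodule.span ℚ {x}, le_trans hW₀ le_sup_left,
        sup_le hWU (Submodule.span_le.mpr (Set.singleton_subset_iff.mpr hxU)), ?_⟩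
      have hlt2 : W < W ⊔ Submodule.span ℚ {x} := by
        refine lt_of_le_of_ne le_sup_left (fun h => hxW ?_)
        rw [h]
        exact Submodule.mem_sup_right (Submodule.mem_span_singleton_self x)
      have hstrict : Module.finrank ℚ ↥W < Module.finrank ℚ ↥(W ⊔ Submodule.span ℚ {x}) :=
        Submodule.finrank_lt_finrank_of_lt hlt2
      have hub : Module.finrank ℚ ↥(W ⊔ Submodule.span ℚ {x}) ≤ m + 1 := by
        have := Submodule.finrank_sup_add_finrank_inf_eq W (Submodule.span ℚ {x})
        have h1' : Module.finrank ℚ ↥(Submodule.span ℚ ({x} : Set (Fin n → ℚ))) = 1 := finrank_span_singleton hx0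
        omega
      omega
    · exact ⟨W₀, le_rfl, hle, le_antisymm h1 hge⟩

/-- if a finite union `⋃ i, L i` has rank `r` and each `L i` is closed
under `ℕ`-sums (`Lᵢℕ ⊆ Lᵢ`), then some `L i` has rank `r`. -/
theorem hasRank_of_iUnion {n k r : ℕ} (L : Fin k → Set (Fin n → ℚ))
    (hrank : HasRank (⋃ i, L i) r)
    (hN : ∀ i, natSums (L i) ⊆ L i) :
    ∃ i, HasRank (L i) r := by
  classical
  by_contra hcon
  push_neg at hcon
  -- For each i, produce a finite family of (r-1)-dim subspaces of span (⋃ i, L i) covering L i.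
  have hsub : ∀ i, L i ⊆ ⋃ j, L j := fun i => Set.subset_iUnion L i
  have key : ∀ i : Fin k, ∃ V : Finset (Submodule ℚ (Fin n → ℚ)),
      (∀ W ∈ V, W ≤ Submodule.span ℚ (⋃ j, L j) ∧ Module.finrank ℚ ↥W + 1 = r) ∧
      L i ⊆ ⋃ W ∈ V, (W : Set (Fin n → ℚ)) := by
    intro i
    have hnot := hcon i
    rw [HasRank] at hnot
    push_neg at hnot
    have hspanle : Submodule.span ℚ (L i) ≤ Submodule.span ℚ (⋃ j, L j) :=
      Submodule.span_mono (hsub i)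
    by_cases hfr : Module.finrank ℚ ↥(Submodule.span ℚ (L i)) = r
    · obtain ⟨V, hV1, hV2⟩ := hnot hfr
      exact ⟨V, fun W hW => ⟨le_trans (hV1 W hW).1 hspanle, (hV1 W hW).2⟩, hV2⟩
    · -- finrank span (L i) < r; extend to one (r-1)-dim subspace
      have hle' : Module.finrank ℚ ↥(Submodule.span ℚ (L i)) ≤
          Module.finrank ℚ ↥(Submodule.span ℚ (⋃ j, L j)) :=
        Submodule.finrank_mono hspanle
      have hr : Module.finrank ℚ ↥(Submodule.span ℚ (⋃ j, L j)) = r := hrank.1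
      have hlt : Module.finrank ℚ ↥(Submodule.span ℚ (L i)) < r := by omega
      obtain ⟨W, hW₀, hWU, hWm⟩ := exists_between_finrank (Submodule.span ℚ (⋃ j, L j))
        (Submodule.span ℚ (L i)) hspanle (r - 1) (by omega) (by omega)
      refine ⟨{W}, ?_, ?_⟩
      · intro W' hW'
        rw [Finset.mem_singleton] at hW'
        subst hW'
        exact ⟨hWU, by omega⟩
      · intro x hx
        simp only [Finset.mem_singleton, Set.mem_iUnion]
        exact ⟨W, rfl, hW₀ (Submodule.subset_span hx)⟩
  choose V hV1 hV2 using key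
  set Vall : Finset (Submodule ℚ (Fin n → ℚ)) := Finset.univ.biUnion V with hVall
  apply hrank.2 Vall
  · intro W hW
    rw [Finset.mem_biUnion] at hW
    obtain ⟨i, _, hWi⟩ := hW
    exact hV1 i W hWi
  · intro x hx
    rw [Set.mem_iUnion] at hx
    obtain ⟨i, hxi⟩ := hx
    have := hV2 i hxi
    rw [Set.mem_iUnion₂] at this ⊢
    obtain ⟨W, hWV, hxW⟩ := this
    exact ⟨W, Finset.mem_biUnion.mpr ⟨i, Finset.mem_univ i, hWV⟩, hxW⟩


end WordEquations
end

section
/- Let E be a word equation in n unknowns. Then: (1) 𝒮_E = 0 if and only if E is trivial (i.e., its two sides are equal words); and (2) if 𝒮_E ≠ 0 and β ∈ ℕ₀ⁿ satisfies 𝒮_E(β) = 0, then at least two coordinates of β are zero. -/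
open scoped BigOperators

namespace WordEquations

lemma sideS_nil {n : ℕ} (j : Fin n) : sideS ([] : List (Fin n)) j = 0 := by
  simp [sideS]

lemma sideS_cons {n : ℕ} (a : Fin n) (w : List (Fin n)) (j : Fin n) :
    sideS (a :: w) j = (if a = j then 1 else 0) + MvPolynomial.X a * sideS w j := by
  rw [sideS]
  show (∑ i : Fin (w.length + 1), if (a :: w).get i = j
      then ((List.take (i : ℕ) (a :: w)).map MvPolynomial.X).prod else 0) = _
  rw [Fin.sum_univ_succ]
  congr 1
  unfold sideS
  rw [Finset.mul_sum]
  apply Finset.sum_congr rfl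
  intro i _
  simp [List.get_cons_succ, List.take_succ_cons, mul_ite]

lemma evalAt_sideS_nil {n : ℕ} (β : Fin n → ℕ) (j : Fin n) :
    evalAt β (sideS ([] : List (Fin n)) j) = 0 := by
  simp [sideS_nil, evalAt]

lemma evalAt_sideS_cons {n : ℕ} (β : Fin n → ℕ) (a : Fin n) (w : List (Fin n)) (j : Fin n) :
    evalAt β (sideS (a :: w) j)
      = (if a = j then 1 else 0) + Polynomial.X ^ β a * evalAt β (sideS w j) := by
  rw [sideS_cons]
  simp only [evalAt, MvPolynomial.eval₂_add, MvPolynomial.eval₂_mul, MvPolynomial.eval₂_X]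
  congr 1
  split_ifs <;> simp

lemma coeff_nonneg {n : ℕ} (β : Fin n → ℕ) (w : List (Fin n)) (j : Fin n) (k : ℕ) :
    0 ≤ (evalAt β (sideS w j)).coeff k := by
  induction w generalizing k with
  | nil => simp [evalAt_sideS_nil]
  | cons a w ih =>
    rw [evalAt_sideS_cons, Polynomial.coeff_add, mul_comm, Polynomial.coeff_mul_X_pow']
    have h1 : (0:ℤ) ≤ ((if a = j then 1 else 0) : Polynomial ℤ).coeff k := by
      split_ifs with h
      · rw [Polynomial.coeff_one]; split_ifs <;> norm_num
      · simp
    have h2 : (0:ℤ) ≤ if β a ≤ k then (evalAt β (sideS w j)).coeff (k - β a) else 0 := by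
      split_ifs with h
      · exact ih _
      · exact le_refl _
    exact add_nonneg h1 h2

lemma coeff0_cons {n : ℕ} (β : Fin n → ℕ) (a : Fin n) (w : List (Fin n)) (j : Fin n) :
    (evalAt β (sideS (a :: w) j)).coeff 0
      = (if a = j then (1:ℤ) else 0)
        + if β a ≤ 0 then (evalAt β (sideS w j)).coeff 0 else 0 := by
  rw [evalAt_sideS_cons, Polynomial.coeff_add, mul_comm, Polynomial.coeff_mul_X_pow']
  congr 1
  · split_ifs <;> simp
  · simp

lemma coeff0_self_ge_one {n : ℕ} (β : Fin n → ℕ) (b : Fin n) (v : List (Fin n)) :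
    1 ≤ (evalAt β (sideS (b :: v) b)).coeff 0 := by
  rw [coeff0_cons, if_pos rfl]
  have h2 : (0:ℤ) ≤ if β b ≤ 0 then (evalAt β (sideS v b)).coeff 0 else 0 := by
    split_ifs
    · exact coeff_nonneg β v b 0
    · exact le_refl _
  linarith

lemma coeff0_ne_zero {n : ℕ} (β : Fin n → ℕ) (a : Fin n) (w : List (Fin n)) (j : Fin n)
    (hab : a ≠ j) (ha : β a ≠ 0) :
    (evalAt β (sideS (a :: w) j)).coeff 0 = 0 := by
  rw [coeff0_cons, if_neg hab, if_neg (by omega)]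
  ring

lemma key {n : ℕ} (β : Fin n → ℕ) (hβ : ∀ i j, β i = 0 → β j = 0 → i = j) :
    ∀ u v : List (Fin n), (∀ j, evalAt β (sideS u j) = evalAt β (sideS v j)) → u = v := by
  intro u
  induction u with
  | nil =>
    intro v hv
    cases v with
    | nil => rfl
    | cons b v' =>
      exfalso
      have h := congrArg (fun p => Polynomial.coeff p 0) (hv b)
      simp only [evalAt_sideS_nil, Polynomial.coeff_zero] at h
      have h1 := coeff0_self_ge_one β b v'
      rw [← h] at h1
      linarith
  | cons a u' ih =>
    intro v hv
    cases v with
    | nil =>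
      exfalso
      have h := congrArg (fun p => Polynomial.coeff p 0) (hv a)
      simp only [evalAt_sideS_nil, Polynomial.coeff_zero] at h
      have h1 := coeff0_self_ge_one β a u'
      rw [h] at h1
      linarith
    | cons b v' =>
      by_cases hab : a = b
      · subst hab
        have huv : ∀ j, evalAt β (sideS u' j) = evalAt β (sideS v' j) := by
          intro j
          have h := hv j
          rw [evalAt_sideS_cons, evalAt_sideS_cons] at h
          exact mul_left_cancel₀ (pow_ne_zero _ Polynomial.X_ne_zero) (add_left_cancel h)
        rw [ih v' huv]
      · exfalso
        rcases Nat.eq_zero_or_pos (β a) with ha | ha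
        · have hb : β b ≠ 0 := fun hb => hab (hβ a b ha hb)
          have h := congrArg (fun p => Polynomial.coeff p 0) (hv a)
          rw [coeff0_ne_zero β b v' a (fun e => hab e.symm) hb] at h
          have h1 := coeff0_self_ge_one β a u'
          rw [h] at h1
          linarith
        · have h := congrArg (fun p => Polynomial.coeff p 0) (hv b)
          rw [coeff0_ne_zero β a u' b hab (by omega)] at h
          have h1 := coeff0_self_ge_one β b v'
          rw [← h] at h1
          linarith

/-- `𝒮_E = 0` iff `E` is trivial, and if `𝒮_E ≠ 0` and `𝒮_E(β) = 0`
then at least two coordinates of `β` are zero. -/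
theorem SE_zero_iff_trivial {n : ℕ} (E : List (Fin n) × List (Fin n)) :
    ((∀ j, SE E j = 0) ↔ E.1 = E.2) ∧
    ((¬ ∀ j, SE E j = 0) → ∀ β : Fin n → ℕ,
      (∀ j, evalAt β (SE E j) = 0) → ∃ i j, i ≠ j ∧ β i = 0 ∧ β j = 0) := by
  have hSE : ∀ j, SE E j = 0 ↔ sideS E.1 j = sideS E.2 j := fun j => sub_eq_zero
  constructor
  · constructor
    · intro h
      apply key (fun _ => 1) (by intro i j hi hj; simp at hi) E.1 E.2
      intro j
      rw [(hSE j).mp (h j)]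
    · intro h j
      rw [SE, h, sub_self]
  · intro hne β hβ0
    by_contra hcon
    push_neg at hcon
    have hβ : ∀ i j, β i = 0 → β j = 0 → i = j := by
      intro i j hi hj
      by_contra hij
      exact hcon i j hij hi hj
    have heq : ∀ j, evalAt β (sideS E.1 j) = evalAt β (sideS E.2 j) := by
      intro j
      have h := hβ0 j
      rw [SE] at h
      rw [evalAt, MvPolynomial.eval₂_sub, sub_eq_zero] at h
      exact h
    have huv : E.1 = E.2 := key β hβ E.1 E.2 heq
    exact hne fun j => (hSE j).mpr (by rw [huv])


end WordEquations
end

section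
/- Let λ ∈ ℤⁿ ∖ {0} have coprime coefficients and let {γ₁,…,γ_{n−1}} ⊆ 𝒩(λ) be linearly independent over ℚ. If α, β ∈ ℕ₀ⁿ satisfy (X^α − X^β)(γᵢ) = 0 for each i = 1,…,n−1, then X^{λ⁺} − X^{λ⁻} divides X^α − X^β in ℤ[X₁,…,Xₙ]. -/
open scoped BigOperators

namespace WordEquations

lemma Xpow_add {n : ℕ} (a b : Fin n → ℕ) :
    Xpow (fun t => a t + b t) = Xpow a * Xpow b := by
  simp [Xpow, pow_add, Finset.prod_mul_distrib]

lemma Xpow_mul {n : ℕ} (m : ℕ) (a : Fin n → ℕ) :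
    Xpow (fun t => m * a t) = Xpow a ^ m := by
  simp only [Xpow, ← Finset.prod_pow]
  exact Finset.prod_congr rfl fun i _ => by rw [← pow_mul, mul_comm]

lemma core {n : ℕ} (lam : Fin n → ℤ) (m : ℕ) (α β : Fin n → ℕ)
    (h : ∀ t, (α t : ℤ) - β t = (m : ℤ) * lam t) :
    (Xpow (lamPos lam) - Xpow (lamNeg lam)) ∣ (Xpow α - Xpow β) := by
  set μ : Fin n → ℕ := fun t => min (α t) (β t) with hμ
  have key : ∀ t, α t = μ t + m * lamPos lam t ∧ β t = μ t + m * lamNeg lam t := by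
    intro t
    obtain ⟨d, hd⟩ : ∃ d, m * lamPos lam t = d := ⟨_, rfl⟩
    obtain ⟨e, he⟩ : ∃ e, m * lamNeg lam t = e := ⟨_, rfl⟩
    have hde : (d : ℤ) - e = (m : ℤ) * lam t := by
      rw [← hd, ← he]
      push_cast
      rw [← mul_sub]
      rw [show ((lamPos lam t : ℤ) - (lamNeg lam t : ℤ)) = lam t from
        Int.toNat_sub_toNat_neg (lam t)]
    have hmin : d = 0 ∨ e = 0 := by
      rcases le_or_gt 0 (lam t) with hl | hl
      · right
        have h0 : (-(lam t)).toNat = 0 := by omega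
        rw [← he]
        show m * (-(lam t)).toNat = 0
        rw [h0, mul_zero]
      · left
        have h0 : (lam t).toNat = 0 := by omega
        rw [← hd]
        show m * (lam t).toNat = 0
        rw [h0, mul_zero]
    have ht := h t
    rw [hd, he]
    constructor <;> simp only [μ] <;> omega
  have hα : α = fun t => μ t + m * lamPos lam t := funext fun t => (key t).1
  have hβ : β = fun t => μ t + m * lamNeg lam t := funext fun t => (key t).2
  rw [hα, hβ, Xpow_add, Xpow_add, Xpow_mul, Xpow_mul, ← mul_sub]
  exact Dvd.dvd.mul_left (sub_dvd_pow_sub_pow _ _ m) _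

lemma xpow_nat_eq_one {m : ℕ}
    (h : (algebraMap (Polynomial ℤ) RatX Polynomial.X) ^ m = 1) : m = 0 := by
  have hinj := IsFractionRing.injective (Polynomial ℤ) RatX
  have : (Polynomial.X : Polynomial ℤ) ^ m = 1 := by
    apply hinj; rw [map_pow, map_one]; exact h
  have := congrArg Polynomial.natDegree this
  simpa using this

lemma exp_eq {a b : ℤ}
    (h : (algebraMap (Polynomial ℤ) RatX Polynomial.X) ^ a -
        (algebraMap (Polynomial ℤ) RatX Polynomial.X) ^ b = 0) : a = b := by
  set u : RatX := algebraMap (Polynomial ℤ) RatX Polynomial.X with hu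
  have hu0 : u ≠ 0 := by
    rw [hu]
    intro hc
    exact Polynomial.X_ne_zero
      (IsFractionRing.injective (Polynomial ℤ) RatX (by simp only [map_zero]; exact hc))
  have hab : u ^ (a - b) = 1 := by
    rw [zpow_sub₀ hu0]
    rw [sub_eq_zero] at h
    rw [h]
    exact div_self (zpow_ne_zero _ hu0)
  rcases le_or_gt b a with hba | hba
  · have : u ^ (a - b).toNat = 1 := by
      rw [← zpow_natCast, Int.toNat_of_nonneg (by omega)]; exact hab
    have := xpow_nat_eq_one this
    omega
  · have hab' : u ^ (b - a) = 1 := by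
      have : u ^ (b - a) = (u ^ (a - b))⁻¹ := by
        rw [← zpow_neg]; ring_nf
      rw [this, hab, inv_one]
    have : u ^ (b - a).toNat = 1 := by
      rw [← zpow_natCast, Int.toNat_of_nonneg (by omega)]; exact hab'
    have := xpow_nat_eq_one this
    omega

noncomputable def dotL {n : ℕ} (c : Fin n → ℚ) : (Fin n → ℚ) →ₗ[ℚ] ℚ :=
  ∑ t, c t • LinearMap.proj t

lemma dotL_apply {n : ℕ} (c w : Fin n → ℚ) : dotL c w = ∑ t, c t * w t := by
  simp [dotL, LinearMap.proj]

/-- if `λ` is nonzero with coprime coefficients, `γ₁,…,γ_{n-1} ∈ 𝒩(λ)`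
are linearly independent over `ℚ`, and `(X^α - X^β)(γᵢ) = x^{α·γᵢ} - x^{β·γᵢ} = 0` in
`ℚ(x)` for each `i`, then `X^{λ⁺} - X^{λ⁻}` divides `X^α - X^β`. -/
theorem Xpow_sub_dvd {n : ℕ} (lam : Fin n → ℤ) (hne : lam ≠ 0)
    (hcop : Finset.univ.gcd lam = 1)
    (γ : Fin (n - 1) → Fin n → ℤ)
    (hγ : ∀ i, ∑ t, lam t * γ i t = 0)
    (hind : LinearIndependent ℚ (fun i => fun t => ((γ i t : ℚ))))
    (α β : Fin n → ℕ)
    (hval : ∀ i,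
      (algebraMap (Polynomial ℤ) RatX Polynomial.X) ^ (∑ t, (α t : ℤ) * γ i t) -
        (algebraMap (Polynomial ℤ) RatX Polynomial.X) ^ (∑ t, (β t : ℤ) * γ i t) = 0) :
    (Xpow (lamPos lam) - Xpow (lamNeg lam)) ∣ (Xpow α - Xpow β) := by
  obtain ⟨t₀, ht₀⟩ : ∃ t, lam t ≠ 0 := by
    by_contra hc
    push_neg at hc
    exact hne (funext fun t => hc t)
  set lamQ : Fin n → ℚ := fun t => (lam t : ℚ) with hlamQ
  set γQ : Fin (n-1) → Fin n → ℚ := fun i t => (γ i t : ℚ) with hγQ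
  set v : Fin n → ℚ := fun t => (α t : ℚ) - (β t : ℚ) with hv
  have hexp : ∀ i, ∑ t, (α t : ℤ) * γ i t = ∑ t, (β t : ℤ) * γ i t := fun i => exp_eq (hval i)
  have hvγ : ∀ i, ∑ t, v t * γQ i t = 0 := by
    intro i
    have hcast : ((∑ t, (α t : ℤ) * γ i t : ℤ) : ℚ) = ((∑ t, (β t : ℤ) * γ i t : ℤ) : ℚ) := by
      exact congrArg (fun z : ℤ => (z : ℚ)) (hexp i)
    push_cast at hcast
    have heq : ∑ t, v t * γQ i t =
        (∑ t, (α t : ℚ) * (γ i t : ℚ)) - ∑ t, (β t : ℚ) * (γ i t : ℚ) := by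
      rw [← Finset.sum_sub_distrib]
      exact Finset.sum_congr rfl fun t _ => by simp only [hv, hγQ]; ring
    rw [heq, hcast, sub_self]
  have hlamγ : ∀ i, ∑ t, lamQ t * γQ i t = 0 := by
    intro i
    have hcast : ((∑ t, lam t * γ i t : ℤ) : ℚ) = ((0 : ℤ) : ℚ) := by
      exact congrArg (fun z : ℤ => (z : ℚ)) (hγ i)
    push_cast at hcast
    exact hcast
  set φ : (Fin n → ℚ) →ₗ[ℚ] ℚ := dotL lamQ with hφ
  have hγker : ∀ i, γQ i ∈ LinearMap.ker φ := fun i => by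
    rw [LinearMap.mem_ker, hφ, dotL_apply]
    exact hlamγ i
  have hφne : φ (Pi.single t₀ 1) ≠ 0 := by
    rw [hφ, dotL_apply]
    rw [Finset.sum_eq_single t₀]
    · simp only [Pi.single_eq_same, mul_one, hlamQ, ne_eq, Int.cast_eq_zero]
      exact ht₀
    · intro b _ hb
      simp [Pi.single_apply, hb]
    · intro hb
      exact absurd (Finset.mem_univ t₀) hb
  have hrange : Module.finrank ℚ ↥(LinearMap.range φ) = 1 := by
    have h1 : Module.finrank ℚ ↥(LinearMap.range φ) ≤ 1 := by
      simpa using Submodule.finrank_le (LinearMap.range φ)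
    have h2 : 0 < Module.finrank ℚ ↥(LinearMap.range φ) := by
      rw [Module.finrank_pos_iff]
      exact ⟨⟨⟨φ (Pi.single t₀ 1), LinearMap.mem_range_self _ _⟩, 0, by
        simp only [ne_eq, Submodule.mk_eq_zero]; exact hφne⟩⟩
    omega
  have hker : Module.finrank ℚ ↥(LinearMap.ker φ) = n - 1 := by
    have hrk := LinearMap.finrank_range_add_finrank_ker φ
    rw [hrange, Module.finrank_pi] at hrk
    simp only [Fintype.card_fin] at hrk
    omega
  have hspan : Submodule.span ℚ (Set.range γQ) = LinearMap.ker φ := by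
    apply Submodule.eq_of_le_of_finrank_le
    · rw [Submodule.span_le]
      rintro _ ⟨i, rfl⟩
      exact hγker i
    · rw [hker, finrank_span_eq_card (by exact hind)]
      simp
  set Λ : ℚ := ∑ t, lamQ t * lamQ t with hΛ
  have hΛpos : 0 < Λ := by
    have h1 : (0:ℚ) < lamQ t₀ * lamQ t₀ := by
      apply mul_self_pos.mpr
      simp only [hlamQ, ne_eq, Int.cast_eq_zero]
      exact ht₀
    calc (0:ℚ) < lamQ t₀ * lamQ t₀ := h1
    _ ≤ Λ := Finset.single_le_sum (fun t _ => mul_self_nonneg (lamQ t)) (Finset.mem_univ t₀)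
  set q : ℚ := (∑ t, lamQ t * v t) / Λ with hq
  set v' : Fin n → ℚ := fun t => v t - q * lamQ t with hv'
  have hv'ker : v' ∈ LinearMap.ker φ := by
    rw [LinearMap.mem_ker, hφ, dotL_apply]
    have heq : ∑ t, lamQ t * v' t = (∑ t, lamQ t * v t) - q * Λ := by
      rw [hΛ, Finset.mul_sum, ← Finset.sum_sub_distrib]
      exact Finset.sum_congr rfl fun t _ => by simp only [hv']; ring
    rw [heq, hq, div_mul_cancel₀ _ (ne_of_gt hΛpos), sub_self]
  have hv'mem : v' ∈ Submodule.span ℚ (Set.range γQ) := by rw [hspan]; exact hv'ker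
  have hψ : Submodule.span ℚ (Set.range γQ) ≤ LinearMap.ker (dotL v') := by
    rw [Submodule.span_le]
    rintro _ ⟨i, rfl⟩
    rw [SetLike.mem_coe, LinearMap.mem_ker, dotL_apply]
    have heq : ∑ t, v' t * γQ i t =
        (∑ t, v t * γQ i t) - q * ∑ t, lamQ t * γQ i t := by
      rw [Finset.mul_sum, ← Finset.sum_sub_distrib]
      exact Finset.sum_congr rfl fun t _ => by simp only [hv']; ring
    rw [heq, hvγ i, hlamγ i, mul_zero, sub_self]
  have hv'0 : ∀ t, v' t = 0 := by
    have h0 : ∑ t, v' t * v' t = 0 := by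
      have := hψ hv'mem
      rwa [LinearMap.mem_ker, dotL_apply] at this
    intro t
    exact mul_self_eq_zero.mp
      ((Finset.sum_eq_zero_iff_of_nonneg (fun t _ => mul_self_nonneg (v' t))).mp h0 t
        (Finset.mem_univ t))
  have hvq : ∀ t, v t = q * lamQ t := by
    intro t
    have := hv'0 t
    simp only [hv'] at this
    linarith
  -- q is an integer
  have hint : ∀ t, ((q.den : ℤ)) ∣ lam t := by
    intro t
    have hz : q * lamQ t = (((α t : ℤ) - β t : ℤ) : ℚ) := by
      rw [← hvq t]
      simp only [hv]
      push_cast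
      ring
    have key : q.num * lam t = ((α t : ℤ) - β t) * q.den := by
      have hden : (q.den : ℚ) ≠ 0 := by exact_mod_cast q.den_ne_zero
      have hQ : (q.num : ℚ) * lam t = (((α t : ℤ) - β t : ℤ) : ℚ) * q.den := by
        rw [← Rat.num_div_den q, hlamQ] at hz
        field_simp at hz
        push_cast
        push_cast at hz
        linarith
      exact_mod_cast hQ
    have hdvd : (q.den : ℤ) ∣ q.num * lam t := key ▸ dvd_mul_left _ _
    have hcopq : IsCoprime ((q.den : ℤ)) q.num := by
      rw [Int.isCoprime_iff_gcd_eq_one]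
      simpa [Int.gcd, Nat.coprime_iff_gcd_eq_one, Nat.Coprime] using q.reduced.symm
    exact hcopq.dvd_of_dvd_mul_left hdvd
  have hden1 : q.den = 1 := by
    have hdg : (q.den : ℤ) ∣ Finset.univ.gcd lam := Finset.dvd_gcd (fun t _ => hint t)
    rw [hcop] at hdg
    exact_mod_cast Int.eq_one_of_dvd_one (by positivity) hdg
  have hqk : q = ((q.num : ℤ) : ℚ) := ((Rat.den_eq_one_iff q).mp hden1).symm
  set k : ℤ := q.num with hk
  have hkeq : ∀ t, (α t : ℤ) - β t = k * lam t := by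
    intro t
    have h1 := hvq t
    rw [hqk] at h1
    simp only [hv, hlamQ] at h1
    exact_mod_cast h1
  rcases le_or_gt 0 k with hkn | hkn
  · apply core lam k.toNat
    intro t
    rw [Int.toNat_of_nonneg hkn]
    exact hkeq t
  · have hneg : ∀ t, (β t : ℤ) - α t = ((-k).toNat : ℤ) * lam t := by
      intro t
      rw [Int.toNat_of_nonneg (by omega)]
      have := hkeq t
      have : (β t : ℤ) - α t = -(k * lam t) := by linarith
      rw [this]; ring
    have hdvd := core lam (-k).toNat β α hneg
    have hswap : Xpow α - Xpow β = -(Xpow β - Xpow α) := by ring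
    rw [hswap]
    exact dvd_neg.mpr hdvd


end WordEquations
end
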